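/- arXiv:math/9604217 — 3 statements merged into one kernel-verified Lean document; each statement's English description precedes it below -/
import Mathlib

section
/- Let (S_α)_{α<ω₁} be a Schreier hierarchy and let N = (n_i)_{i≥1} be a strictly increasing sequence of positive integers. Then there exists a subsequence L = (ℓ_i)_{i≥1} ∈ [N] such that for every countable ordinal α and every finite set F ⊂ ℕ of indices: if {ℓ_i : i ∈ F} ∈ S_α, then {ℓ_{i+1} : i ∈ F} ∈ S_α(N). -/
open Filter

noncomputable section

/-- `c₀₀`: the finitely supported real sequences. -/
abbrev C00 : Type := ℕ →₀ ℝ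

/-- The unit vector basis of `c₀₀`. -/
def eBasis (i : ℕ) : C00 := Finsupp.single i 1

/-- `f` is a norm on `c₀₀`. -/
def IsNorm (f : C00 → ℝ) : Prop :=
  (∀ v w : C00, f (v + w) ≤ f v + f w) ∧
  (∀ (c : ℝ) (v : C00), f (c • v) = |c| * f v) ∧
  (∀ v : C00, v ≠ 0 → 0 < f v)

/-- `E < F` for finite sets of naturals: every element of `E` is smaller than
every element of `F` (vacuously true if one of them is empty). -/
def FinLt (E F : Finset ℕ) : Prop := ∀ a ∈ E, ∀ b ∈ F, a < b

/-- `min ran(v)` = the minimum of the support of `v`. -/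
def minSupp (v : C00) : ℕ := sInf {j | v j ≠ 0}

/-- `max ran(v)` = the maximum of the support of `v`. -/
def maxSupp (v : C00) : ℕ := sSup {j | v j ≠ 0}

/-- `ran(v)`: the smallest integer interval containing the support of `v`. -/
def ranSet (v : C00) : Set ℕ := Set.Icc (minSupp v) (maxSupp v)

/-- `E` is an interval of naturals. -/
def IsInterval (E : Finset ℕ) : Prop :=
  ∀ a ∈ E, ∀ b ∈ E, ∀ c : ℕ, a ≤ c → c ≤ b → c ∈ E

/-- The Schreier families `S_n`, `n ∈ ℕ`. -/
def SchreierFam : ℕ → Set (Finset ℕ)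
  | 0 => {F : Finset ℕ | F.card ≤ 1}
  | (n + 1) => {F : Finset ℕ | ∃ (k : ℕ) (Fs : Fin k → Finset ℕ),
      (∀ i, Fs i ∈ SchreierFam n) ∧
      (∀ i j : Fin k, i < j → FinLt (Fs i) (Fs j)) ∧
      (∀ i, ∀ a ∈ Fs i, k ≤ a) ∧
      F = Finset.univ.biUnion Fs}

/-- `S_ω = {F : n ≤ F and F ∈ S_n for some n}`. -/
def SchreierOmega : Set (Finset ℕ) :=
  {F : Finset ℕ | ∃ n : ℕ, (∀ a ∈ F, n ≤ a) ∧ F ∈ SchreierFam n}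

/-- The restriction `Ex` of `x` to a finite set `E`. -/
def restr (E : Finset ℕ) (v : C00) : C00 := v.filter (fun j => j ∈ E)

/-- `(E_i)` is an admissible family of (nonempty, finite) sets for the family `S`:
`E_1 < E_2 < ⋯` and `{min E_i} ∈ S`. -/
def AdmissibleSets (S : Set (Finset ℕ)) {m : ℕ} (E : Fin m → Finset ℕ) : Prop :=
  (∀ i, (E i).Nonempty) ∧
  (∀ i j : Fin m, i < j → FinLt (E i) (E j)) ∧
  (Finset.univ.image fun i => sInf ((E i : Set ℕ))) ∈ S

/-- `(E_i)` is an admissible family of (nonempty) intervals for the family `S`. -/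
def AdmissibleIntervals (S : Set (Finset ℕ)) {m : ℕ} (E : Fin m → Finset ℕ) : Prop :=
  (∀ i, (E i).Nonempty ∧ IsInterval (E i)) ∧
  (∀ i j : Fin m, i < j → FinLt (E i) (E j)) ∧
  (Finset.univ.image fun i => sInf ((E i : Set ℕ))) ∈ S

/-- `nrm` satisfies the implicit mixed Tsirelson norm equation with parameters `θ_q`
and families `Sq q` (`q ≥ 1`):
`‖x‖ = max(‖x‖_∞, sup{θ_q Σ ‖E_i x‖ : q ≥ 1, (E_i) q-admissible})`. -/
def MixedTsirelsonNormGen (θ : ℕ → ℝ) (Sq : ℕ → Set (Finset ℕ)) (nrm : C00 → ℝ) : Prop :=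
  ∀ x : C00, nrm x =
    max (sSup {r : ℝ | ∃ j : ℕ, r = |x j|})
      (sSup {r : ℝ | ∃ (q m : ℕ) (E : Fin m → Finset ℕ), 1 ≤ q ∧
        AdmissibleSets (Sq q) E ∧ r = θ q * ∑ i, nrm (restr (E i) x)})

/-- `nrm` is the norm of the mixed Tsirelson space `T(θ_n, S_n)_{n ∈ ℕ}`. -/
def MixedTsirelsonNorm (θ : ℕ → ℝ) (nrm : C00 → ℝ) : Prop :=
  MixedTsirelsonNormGen θ SchreierFam nrm

/-- `(θ_n)_{n ≥ 1}` is a regular sequence. -/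
def RegularSeq (θ : ℕ → ℝ) : Prop :=
  (∀ n : ℕ, 1 ≤ n → 0 < θ n ∧ θ n < 1) ∧
  (∀ n : ℕ, 1 ≤ n → θ (n + 1) ≤ θ n) ∧
  Tendsto θ atTop (nhds 0) ∧
  (∀ n m : ℕ, 1 ≤ n → 1 ≤ m → θ n * θ m ≤ θ (n + m))

/-- The `i`-th block `Σ_{j = m_i}^{m_{i+1} - 1} a_j x_j` of a block sequence of `(x_j)`
with coefficients `a` and breakpoints `m`. -/
def blk (x : ℕ → C00) (a : ℕ → ℝ) (m : ℕ → ℕ) (i : ℕ) : C00 :=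
  ∑ j ∈ Finset.Ico (m i) (m (i + 1)), a j • x j

/-- The minimum of the range w.r.t. `(x_j)` of the `i`-th block: the least `j` in
`[m_i, m_{i+1})` with `a_j ≠ 0`. -/
def minRangeIdx (a : ℕ → ℝ) (m : ℕ → ℕ) (i : ℕ) : ℕ :=
  sInf {j : ℕ | j ∈ Finset.Ico (m i) (m (i + 1)) ∧ a j ≠ 0}

/-- `(x_i)` is an (infinite) block sequence of `(e_i)`: nonzero and `x_1 < x_2 < ⋯`. -/
def IsBlockSeq (x : ℕ → C00) : Prop :=
  (∀ i, x i ≠ 0) ∧ ∀ i, FinLt (x i).support (x (i + 1)).support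

/-- `(z_i)` is an (infinite) block sequence of `(x_i)`. -/
def IsBlockOf (x z : ℕ → C00) : Prop :=
  ∃ (a : ℕ → ℝ) (m : ℕ → ℕ), StrictMono m ∧ (∀ i, z i = blk x a m i) ∧ ∀ i, z i ≠ 0

/-- The set of `δ ≥ 0` witnessing the `ℓ_1`-estimate for all finite block sequences of
`(x_i)` that are admissible (for the family `S`) *with respect to `(x_i)`*. -/
def deltaSetX (S : Set (Finset ℕ)) (nrm : C00 → ℝ) (x : ℕ → C00) : Set ℝ :=
  {δ : ℝ | 0 ≤ δ ∧ ∀ (n : ℕ) (a : ℕ → ℝ) (m : ℕ → ℕ), StrictMono m →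
    (∀ i < n, blk x a m i ≠ 0) →
    (Finset.range n).image (fun i => minRangeIdx a m i) ∈ S →
    δ * ∑ i ∈ Finset.range n, nrm (blk x a m i) ≤
      nrm (∑ i ∈ Finset.range n, blk x a m i)}

/-- The set of `δ ≥ 0` witnessing the `ℓ_1`-estimate for all finite block sequences of
`(x_i)` that are admissible (for the family `S`) *with respect to `(e_i)`*. -/
def deltaSetE (S : Set (Finset ℕ)) (nrm : C00 → ℝ) (x : ℕ → C00) : Set ℝ :=
  {δ : ℝ | 0 ≤ δ ∧ ∀ (n : ℕ) (a : ℕ → ℝ) (m : ℕ → ℕ), StrictMono m →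
    (∀ i < n, blk x a m i ≠ 0) →
    (Finset.range n).image (fun i => minSupp (blk x a m i)) ∈ S →
    δ * ∑ i ∈ Finset.range n, nrm (blk x a m i) ≤
      nrm (∑ i ∈ Finset.range n, blk x a m i)}

/-- `δ_α(x_i)` (α-admissibility w.r.t. `(x_i)`), for the α-th family `S`. -/
def deltaX (S : Set (Finset ℕ)) (nrm : C00 → ℝ) (x : ℕ → C00) : ℝ :=
  sSup (deltaSetX S nrm x)

/-- `δ_α((x_i),(e_i))` (α-admissibility w.r.t. `(e_i)`), for the α-th family `S`. -/
def deltaE (S : Set (Finset ℕ)) (nrm : C00 → ℝ) (x : ℕ → C00) : ℝ :=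
  sSup (deltaSetE S nrm x)

/-- `nrm'` is an equivalent norm to `nrm`. -/
def EquivNormOn (nrm nrm' : C00 → ℝ) : Prop :=
  ∃ c C : ℝ, 0 < c ∧ (∀ x, c * nrm x ≤ nrm' x) ∧ ∀ x, nrm' x ≤ C * nrm x

/-- The set whose supremum is `δ̈`(S)`(y_i)`: all values `δ_S((z_i), |·|)` where `|·|`
is an equivalent norm on `X` and `(z_i)` is a block sequence of `(y_i)`. -/
def dessSet (S : Set (Finset ℕ)) (nrm : C00 → ℝ) (y : ℕ → C00) : Set ℝ :=
  {d : ℝ | ∃ (nrm' : C00 → ℝ) (z : ℕ → C00), IsNorm nrm' ∧ EquivNormOn nrm nrm' ∧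
    IsBlockOf y z ∧ d = deltaX S nrm' z}

/-- A Schreier hierarchy `(S_α)_{α < ω₁}`. -/
structure IsSchreierHierarchy (S : Ordinal → Set (Finset ℕ)) : Prop where
  zero : S 0 = {F : Finset ℕ | F.card ≤ 1}
  succ : ∀ α : Ordinal, α < Ordinal.omega 1 →
    S (α + 1) = {F : Finset ℕ | ∃ (k : ℕ) (Fs : Fin k → Finset ℕ),
      (∀ i, Fs i ∈ S α) ∧
      (∀ i j : Fin k, i < j → FinLt (Fs i) (Fs j)) ∧
      (∀ i, ∀ a ∈ Fs i, k ≤ a) ∧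
      F = Finset.univ.biUnion Fs}
  limit : ∀ α : Ordinal, α < Ordinal.omega 1 → Order.IsSuccLimit α →
    ∃ f : ℕ → Ordinal, StrictMono f ∧ (⨆ n, f n) = α ∧
      S α = {F : Finset ℕ | ∃ n : ℕ, (∀ a ∈ F, n ≤ a) ∧ F ∈ S (f n)}

/-- `(y_i)` Δ-stabilizes `γ = (γ_α)_{α<ω₁}`. -/
def DeltaStabilizes (S : Ordinal → Set (Finset ℕ)) (nrm : C00 → ℝ)
    (y : ℕ → C00) (γ : Ordinal → ℝ) : Prop :=
  ∃ ε : ℕ → ℝ, Antitone ε ∧ Tendsto ε atTop (nhds 0) ∧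
    ∀ α : Ordinal, α < Ordinal.omega 1 → ∃ m : ℕ, ∀ n : ℕ, m ≤ n →
      ∀ z : ℕ → C00, IsBlockOf (fun i => y (i + n)) z →
        |deltaX (S α) nrm z - γ α| < ε n

/-- `(y_i)` Δ_{(e_i)}-stabilizes `γ = (γ_α)_{α<ω₁}`. -/
def DeltaStabilizesE (S : Ordinal → Set (Finset ℕ)) (nrm : C00 → ℝ)
    (y : ℕ → C00) (γ : Ordinal → ℝ) : Prop :=
  ∃ ε : ℕ → ℝ, Antitone ε ∧ Tendsto ε atTop (nhds 0) ∧
    ∀ α : Ordinal, α < Ordinal.omega 1 → ∃ m : ℕ, ∀ n : ℕ, m ≤ n →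
      ∀ z : ℕ → C00, IsBlockOf (fun i => y (i + n)) z →
        |deltaE (S α) nrm z - γ α| < ε n

/-- `(e_i)` is a basic sequence for the norm `nrm`. -/
def IsBasicE (nrm : C00 → ℝ) : Prop :=
  ∃ K : ℝ, ∀ (a : ℕ → ℝ) (m n : ℕ), m ≤ n →
    nrm (∑ i ∈ Finset.range m, a i • eBasis i) ≤
      K * nrm (∑ i ∈ Finset.range n, a i • eBasis i)

/-- The auxiliary norm `‖x‖_p` (`‖·‖_0 = ‖·‖`). -/
def pnorm (θ : ℕ → ℝ) (nrm : C00 → ℝ) (p : ℕ) (x : C00) : ℝ :=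
  if p = 0 then nrm x
  else θ p * sSup {r : ℝ | ∃ (m : ℕ) (E : Fin m → Finset ℕ),
    AdmissibleIntervals (SchreierFam p) E ∧ r = ∑ i, nrm (restr (E i) x)}

/-- The auxiliary seminorm `‖x‖_{N,p}`. -/
def nNorm (θ : ℕ → ℝ) (nrm : C00 → ℝ) (N p : ℕ) (x : C00) : ℝ :=
  sSup {r : ℝ | ∃ E : Fin N → Finset ℕ, (∀ i, IsInterval (E i)) ∧
    (∀ i j : Fin N, i < j → FinLt (E i) (E j)) ∧ (∀ i, ∀ a ∈ E i, N ≤ a) ∧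
    r = ∑ i, pnorm θ nrm p (restr (E i) x)}

/-- The auxiliary norm `‖x‖_{S_q,p}`. -/
def sNNorm (θ : ℕ → ℝ) (nrm : C00 → ℝ) (q p : ℕ) (x : C00) : ℝ :=
  sSup {r : ℝ | ∃ (m : ℕ) (E : Fin m → Finset ℕ),
    AdmissibleIntervals (SchreierFam q) E ∧ r = ∑ i, pnorm θ nrm p (restr (E i) x)}

/-- Every family in a Schreier hierarchy is spreading: replacing the elements of a
member by larger elements, in an order-preserving way, gives again a member. -/
lemma schreier_spreading (S : Ordinal → Set (Finset ℕ)) (hS : IsSchreierHierarchy S) :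
    ∀ α : Ordinal, α < Ordinal.omega 1 → ∀ F : Finset ℕ, F ∈ S α →
      ∀ φ : ℕ → ℕ, (∀ a ∈ F, ∀ b ∈ F, a < b → φ a < φ b) → (∀ a ∈ F, a ≤ φ a) →
      F.image φ ∈ S α := by
  intro α
  induction α using Ordinal.induction with
  | h α IH =>
    intro hα F hF φ hφmono hφle
    rcases Ordinal.zero_or_succ_or_isSuccLimit α with h0 | ⟨β, rfl⟩ | hlim
    · subst h0
      rw [hS.zero] at hF ⊢
      exact le_trans Finset.card_image_le hF
    · have hβω : β < Ordinal.omega 1 := lt_trans (Order.lt_succ β) hα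
      rw [← Ordinal.add_one_eq_succ] at *
      rw [hS.succ β hβω] at hF ⊢
      obtain ⟨k, Fs, hFs, hlt, hk, hFeq⟩ := hF
      have hsub : ∀ i : Fin k, Fs i ⊆ F := by
        intro i a ha
        rw [hFeq]
        exact Finset.mem_biUnion.mpr ⟨i, Finset.mem_univ i, ha⟩
      refine ⟨k, fun i => (Fs i).image φ, ?_, ?_, ?_, ?_⟩
      · intro i
        exact IH β (lt_of_lt_of_le (Order.lt_succ β) (Ordinal.add_one_eq_succ β).ge)
          hβω (Fs i) (hFs i) φ
          (fun a ha b hb hab => hφmono a (hsub i ha) b (hsub i hb) hab)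
          (fun a ha => hφle a (hsub i ha))
      · intro i j hij a ha b hb
        obtain ⟨u, hu, rfl⟩ := Finset.mem_image.mp ha
        obtain ⟨v, hv, rfl⟩ := Finset.mem_image.mp hb
        exact hφmono u (hsub i hu) v (hsub j hv) (hlt i j hij u hu v hv)
      · intro i a ha
        obtain ⟨u, hu, rfl⟩ := Finset.mem_image.mp ha
        exact le_trans (hk i u hu) (hφle u (hsub i hu))
      · rw [hFeq]
        ext x; simp [Finset.mem_biUnion, Finset.mem_image]; tauto
    · obtain ⟨f, hfmono, hfsup, heq⟩ := hS.limit α hα hlim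
      rw [heq] at hF ⊢
      obtain ⟨n, hn, hFn⟩ := hF
      have hfn : f n < α := by
        calc f n < f (n + 1) := hfmono (Nat.lt_succ_self n)
        _ ≤ ⨆ m, f m := Ordinal.le_iSup f (n + 1)
        _ = α := hfsup
      refine ⟨n, ?_, ?_⟩
      · intro a ha
        obtain ⟨u, hu, rfl⟩ := Finset.mem_image.mp ha
        exact le_trans (hn u hu) (hφle u hu)
      · exact IH (f n) hfn (lt_trans hfn hα) F hFn φ hφmono hφle

/-- The fast-growing subsequence used in Proposition 2.3. -/
def gSeq (N : ℕ → ℕ) : ℕ → ℕ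
  | 0 => 0
  | (i + 1) => max (gSeq N i + 1) (N (gSeq N i))

lemma gSeq_strictMono (N : ℕ → ℕ) : StrictMono (gSeq N) := by
  apply strictMono_nat_of_lt_succ
  intro n
  exact lt_of_lt_of_le (Nat.lt_succ_self _) (le_max_left _ _)

lemma gSeq_ge (N : ℕ → ℕ) (i : ℕ) : N (gSeq N i) ≤ gSeq N (i + 1) := le_max_right _ _

/-- Proposition 2.3: for every strictly increasing sequence `N = (n_i)` of positive
integers there is a subsequence `L = (ℓ_i) ∈ [N]` such that for every `α < ω₁`,
`(ℓ_i)_{i ∈ F} ∈ S_α` implies `(ℓ_{i+1})_{i ∈ F} ∈ S_α(N)`. -/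
theorem schreier_shift_subsequence
    (S : Ordinal → Set (Finset ℕ)) (hS : IsSchreierHierarchy S)
    (N : ℕ → ℕ) (hmono : StrictMono N) (hpos : ∀ i, 0 < N i) :
    ∃ g : ℕ → ℕ, StrictMono g ∧
      ∀ α : Ordinal, α < Ordinal.omega 1 → ∀ F : Finset ℕ,
        F.image (fun i => N (g i)) ∈ S α →
        ∃ G ∈ S α, F.image (fun i => N (g (i + 1))) = G.image N := by
  set g := gSeq N with hg
  have hgmono : StrictMono g := gSeq_strictMono N
  have humono : StrictMono (fun i => N (g i)) := hmono.comp hgmono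
  refine ⟨g, hgmono, ?_⟩
  intro α hα F hF
  -- the "inverse-then-shift" map on the image
  set φ : ℕ → ℕ := fun x => g (sInf {i | N (g i) = x} + 1) with hφ
  have hφu : ∀ i : ℕ, φ (N (g i)) = g (i + 1) := by
    intro i
    have hset : {j | N (g j) = N (g i)} = {i} := by
      ext j
      simp only [Set.mem_setOf_eq, Set.mem_singleton_iff]
      exact ⟨fun h => humono.injective h, fun h => by rw [h]⟩
    simp only [hφ, hset, csInf_singleton]
  have himg : (F.image (fun i => N (g i))).image φ = F.image (fun i => g (i + 1)) := by
    rw [Finset.image_image]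
    exact Finset.image_congr (fun i _ => hφu i)
  have hG : F.image (fun i => g (i + 1)) ∈ S α := by
    rw [← himg]
    apply schreier_spreading S hS α hα _ hF φ
    · intro a ha b hb hab
      obtain ⟨i, hi, rfl⟩ := Finset.mem_image.mp ha
      obtain ⟨j, hj, rfl⟩ := Finset.mem_image.mp hb
      rw [hφu i, hφu j]
      exact hgmono (Nat.succ_lt_succ (humono.lt_iff_lt.mp hab))
    · intro a ha
      obtain ⟨i, hi, rfl⟩ := Finset.mem_image.mp ha
      rw [hφu i]
      exact gSeq_ge N i
  refine ⟨F.image (fun i => g (i + 1)), hG, ?_⟩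
  rw [Finset.image_image]
  rfl

end
end

section
/- Let (S_α)_{α<ω₁} be a Schreier hierarchy and let N = (n_i)_{i≥1} be a strictly increasing sequence of positive integers. Then there exists a subsequence L = (ℓ_i)_{i≥1} ∈ [N] such that for every countable ordinal α and every nonempty finite set F ⊂ ℕ of indices: if {ℓ_i : i ∈ F} ∈ S_α, then {ℓ_i : i ∈ F \ {min F}} ∈ S_α(N). -/
open Filter

noncomputable section

/-- Key structural lemma: each `S α` is hereditary and spreading. If `A ∈ S α` and
`ψ` maps `B` into `A` in an order-preserving way with `ψ b ≤ b`, then `B ∈ S α`. -/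
lemma schreier_spread_subset (S : Ordinal → Set (Finset ℕ)) (hS : IsSchreierHierarchy S) :
    ∀ α : Ordinal, α < Ordinal.omega 1 → ∀ A ∈ S α, ∀ B : Finset ℕ, ∀ ψ : ℕ → ℕ,
    (∀ b ∈ B, ψ b ∈ A) → (∀ b ∈ B, ψ b ≤ b) →
    (∀ b ∈ B, ∀ b' ∈ B, b < b' → ψ b < ψ b') → B ∈ S α := by
  intro α
  induction α using Ordinal.induction with
  | h α IH =>
  intro hα A hA B ψ h1 h2 h3
  rcases Ordinal.zero_or_succ_or_isSuccLimit α with h0 | ⟨β, rfl⟩ | hlim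
  · subst h0
    rw [hS.zero] at hA ⊢
    simp only [Set.mem_setOf_eq] at hA ⊢
    have hinj : Set.InjOn ψ (B : Set ℕ) := by
      intro b hb b' hb' hbb
      by_contra hne
      rcases lt_or_gt_of_ne hne with h | h
      · exact absurd hbb (h3 b hb b' hb' h).ne
      · exact absurd hbb.symm (h3 b' hb' b hb h).ne
    have : B.card = (B.image ψ).card := (Finset.card_image_of_injOn hinj).symm
    rw [this]
    refine le_trans (Finset.card_le_card ?_) hA
    intro a ha
    obtain ⟨b, hb, rfl⟩ := Finset.mem_image.mp ha
    exact h1 b hb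
  · have hβ1 : β + 1 = Order.succ β := Ordinal.add_one_eq_succ β
    have hβω : β < Ordinal.omega 1 := lt_trans (hβ1 ▸ Order.lt_succ β) hα
    rw [← hβ1] at hα hA ⊢
    rw [hS.succ β hβω] at hA ⊢
    obtain ⟨k, Fs, hFs, hltF, hk, hAeq⟩ := hA
    refine ⟨k, fun i => B.filter (fun b => ψ b ∈ Fs i), ?_, ?_, ?_, ?_⟩
    · intro i
      refine IH β (hβ1 ▸ Order.lt_succ β) hβω (Fs i) (hFs i) _ ψ ?_ ?_ ?_
      · intro b hb; exact (Finset.mem_filter.mp hb).2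
      · intro b hb; exact h2 b (Finset.mem_filter.mp hb).1
      · intro b hb b' hb' h
        exact h3 b (Finset.mem_filter.mp hb).1 b' (Finset.mem_filter.mp hb').1 h
    · intro i j hij b hb b' hb'
      obtain ⟨hbB, hbi⟩ := Finset.mem_filter.mp hb
      obtain ⟨hbB', hbj⟩ := Finset.mem_filter.mp hb'
      have hψ : ψ b < ψ b' := hltF i j hij _ hbi _ hbj
      rcases lt_trichotomy b b' with h | h | h
      · exact h
      · subst h; exact absurd hψ (lt_irrefl _)
      · exact absurd (h3 b' hbB' b hbB h) (lt_asymm hψ)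
    · intro i a ha
      obtain ⟨haB, hai⟩ := Finset.mem_filter.mp ha
      exact le_trans (hk i _ hai) (h2 a haB)
    · ext b
      simp only [Finset.mem_biUnion, Finset.mem_filter, Finset.mem_univ, true_and]
      constructor
      · intro hb
        have := h1 b hb
        rw [hAeq] at this
        obtain ⟨i, _, hi⟩ := Finset.mem_biUnion.mp this
        exact ⟨i, hb, hi⟩
      · rintro ⟨i, hb, _⟩; exact hb
  · obtain ⟨f, hf, hsup, heq⟩ := hS.limit α hα hlim
    rw [heq] at hA ⊢
    obtain ⟨n, hn, hA'⟩ := hA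
    have hfn : f n < α := by
      calc f n < f (n + 1) := hf (Nat.lt_succ_self n)
      _ ≤ ⨆ m, f m := Ordinal.le_iSup f (n + 1)
      _ = α := hsup
    refine ⟨n, ?_, IH (f n) hfn (lt_trans hfn hα) A hA' B ψ h1 h2 h3⟩
    intro b hb
    exact le_trans (hn (ψ b) (h1 b hb)) (h2 b hb)

/-- The recursively defined subsequence indices: `g (j+1) ≥ N (g j)`. -/
def gseq (N : ℕ → ℕ) : ℕ → ℕ
  | 0 => 0
  | (j + 1) => max (gseq N j + 1) (N (gseq N j))

lemma gseq_strictMono (N : ℕ → ℕ) : StrictMono (gseq N) :=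
  strictMono_nat_of_lt_succ fun j => lt_of_lt_of_le (Nat.lt_succ_self _)
    (le_max_left _ _)

lemma gseq_ge (N : ℕ → ℕ) (j : ℕ) : N (gseq N j) ≤ gseq N (j + 1) :=
  le_max_right _ _

/-- Corollary 2.4: for every strictly increasing sequence `N = (n_i)` of positive
integers there is a subsequence `L = (ℓ_i) ∈ [N]` such that for every `α < ω₁` and
every nonempty finite `F`: `(ℓ_i)_{i ∈ F} ∈ S_α` implies
`(ℓ_i)_{i ∈ F \ {min F}} ∈ S_α(N)`. -/
theorem schreier_drop_min_subsequence
    (S : Ordinal → Set (Finset ℕ)) (hS : IsSchreierHierarchy S)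
    (N : ℕ → ℕ) (hmono : StrictMono N) (hpos : ∀ i, 0 < N i) :
    ∃ g : ℕ → ℕ, StrictMono g ∧
      ∀ α : Ordinal, α < Ordinal.omega 1 → ∀ F : Finset ℕ, F.Nonempty →
        F.image (fun i => N (g i)) ∈ S α →
        ∃ G ∈ S α, (F.erase (sInf (F : Set ℕ))).image (fun i => N (g i)) = G.image N := by
  classical
  set g := gseq N with hg
  refine ⟨g, gseq_strictMono N, ?_⟩
  intro α hα F hF hmem
  set m := sInf (F : Set ℕ) with hm
  have hFne : (F : Set ℕ).Nonempty := by exact_mod_cast hF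
  have hmF : m ∈ F := by exact_mod_cast Nat.sInf_mem hFne
  have hmin : ∀ i ∈ F, m ≤ i := fun i hi => Nat.sInf_le (by exact_mod_cast hi)
  refine ⟨(F.erase m).image g, ?_, ?_⟩
  · -- membership in S α via the spread/subset lemma
    set ψ : ℕ → ℕ := fun b =>
      if h : ((F.filter (fun j => g j < b))).Nonempty
      then N (g ((F.filter (fun j => g j < b)).max' h)) else 0 with hψ
    have key : ∀ i ∈ F.erase m, ∃ h : (F.filter (fun j => g j < g i)).Nonempty,
        ψ (g i) = N (g ((F.filter (fun j => g j < g i)).max' h)) := by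
      intro i hi
      have him : m < i :=
        lt_of_le_of_ne (hmin i (Finset.mem_of_mem_erase hi))
          (Ne.symm (Finset.ne_of_mem_erase hi))
      have hne : (F.filter (fun j => g j < g i)).Nonempty :=
        ⟨m, Finset.mem_filter.mpr ⟨hmF, gseq_strictMono N him⟩⟩
      exact ⟨hne, dif_pos hne⟩
    refine schreier_spread_subset S hS α hα (F.image (fun i => N (g i))) hmem
      ((F.erase m).image g) ψ ?_ ?_ ?_
    · rintro b hb
      obtain ⟨i, hi, rfl⟩ := Finset.mem_image.mp hb
      obtain ⟨hne, hval⟩ := key i hi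
      rw [hval]
      have ht := (F.filter (fun j => g j < g i)).max'_mem hne
      exact Finset.mem_image.mpr ⟨_, (Finset.mem_filter.mp ht).1, rfl⟩
    · rintro b hb
      obtain ⟨i, hi, rfl⟩ := Finset.mem_image.mp hb
      obtain ⟨hne, hval⟩ := key i hi
      rw [hval]
      set t := (F.filter (fun j => g j < g i)).max' hne with htd
      have ht := (F.filter (fun j => g j < g i)).max'_mem hne
      have hti : t < i := (gseq_strictMono N).lt_iff_lt.mp (Finset.mem_filter.mp ht).2
      calc N (g t) ≤ g (t + 1) := gseq_ge N t
      _ ≤ g i := (gseq_strictMono N).monotone hti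
    · rintro b hb b' hb' hlt
      obtain ⟨i, hi, rfl⟩ := Finset.mem_image.mp hb
      obtain ⟨i', hi', rfl⟩ := Finset.mem_image.mp hb'
      obtain ⟨hne, hval⟩ := key i hi
      obtain ⟨hne', hval'⟩ := key i' hi'
      rw [hval, hval']
      set t := (F.filter (fun j => g j < g i)).max' hne with htd
      set t' := (F.filter (fun j => g j < g i')).max' hne' with htd'
      have ht := (F.filter (fun j => g j < g i)).max'_mem hne
      have hti : t < i := (gseq_strictMono N).lt_iff_lt.mp (Finset.mem_filter.mp ht).2
      have hii' : i < i' := (gseq_strictMono N).lt_iff_lt.mp hlt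
      have hit' : i ≤ t' := Finset.le_max' (F.filter (fun j => g j < g i')) i
        (Finset.mem_filter.mpr ⟨Finset.mem_of_mem_erase hi, gseq_strictMono N hii'⟩)
      exact hmono (gseq_strictMono N (lt_of_lt_of_le hti hit'))
  · rw [Finset.image_image]
    rfl


end
end

section
/- Let X = T(θ_n,S_n)_{n∈ℕ} be a regular mixed Tsirelson space with norm ‖·‖, and let θ = lim_n θ_n^{1/n}. Then for every ε > 0 there is an equivalent 1-unconditional norm |·| on X such that |Σ_{i=1}^n y_i| ≥ (θ − ε)·Σ_{i=1}^n |y_i| for every finite block sequence (y_i)_{i=1}^n of (e_i) with n ≤ min ran(y_1) (i.e. δ₁((X,|·|),(e_i)) ≥ θ − ε). -/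
open Filter

noncomputable section

/-! ### Auxiliary development for Proposition 4.3 -/

section Aux

/-! #### Basic lemmas about `restr` -/

theorem restr_apply (E : Finset ℕ) (v : C00) (j : ℕ) :
    restr E v j = if j ∈ E then v j else 0 := by
  classical
  simp [restr, Finsupp.filter_apply]

theorem restr_support (E : Finset ℕ) (v : C00) :
    (restr E v).support = v.support.filter (fun j => j ∈ E) := by
  classical
  simp [restr, Finsupp.support_filter]

theorem restr_zero (E : Finset ℕ) : restr E (0 : C00) = 0 := by
  ext j; simp [restr_apply]

theorem restr_add (E : Finset ℕ) (v w : C00) :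
    restr E (v + w) = restr E v + restr E w := by
  ext j; by_cases h : j ∈ E <;> simp [restr_apply, h]

theorem restr_smul (E : Finset ℕ) (c : ℝ) (v : C00) :
    restr E (c • v) = c • restr E v := by
  ext j; by_cases h : j ∈ E <;> simp [restr_apply, h]

theorem restr_of_support_subset {E : Finset ℕ} {v : C00} (h : v.support ⊆ E) :
    restr E v = v := by
  ext j
  rw [restr_apply]
  by_cases hj : j ∈ E
  · simp [hj]
  · simp only [hj, if_false]
    by_contra hne
    exact hj (h (Finsupp.mem_support_iff.2 fun h0 => hne h0.symm))

theorem restr_of_disjoint {E : Finset ℕ} {v : C00} (h : ∀ j ∈ v.support, j ∉ E) :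
    restr E v = 0 := by
  ext j
  rw [restr_apply]
  by_cases hj : j ∈ E
  · simp only [hj, if_true, Finsupp.coe_zero, Pi.zero_apply]
    by_contra hne
    exact h j (Finsupp.mem_support_iff.2 hne) hj
  · simp [hj]

theorem restr_inter_of_support_subset {E S : Finset ℕ} {v : C00} (h : v.support ⊆ S) :
    restr (E ∩ S) v = restr E v := by
  ext j
  rw [restr_apply, restr_apply]
  by_cases hj : j ∈ E
  · by_cases hjS : j ∈ S
    · simp [Finset.mem_inter, hj, hjS]
    · have : v j = 0 := by
        by_contra hne
        exact hjS (h (Finsupp.mem_support_iff.2 hne))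
      simp [Finset.mem_inter, hj, hjS, this]
  · simp [Finset.mem_inter, hj]

theorem restr_sum (E : Finset ℕ) {ι : Type*} (s : Finset ι) (f : ι → C00) :
    restr E (∑ i ∈ s, f i) = ∑ i ∈ s, restr E (f i) := by
  classical
  induction s using Finset.induction_on with
  | empty => simp [restr_zero]
  | insert _ _ h ih => rw [Finset.sum_insert h, Finset.sum_insert h, restr_add, ih]

theorem abs_restr_eq {v w : C00} (h : ∀ j, |v j| = |w j|) (E : Finset ℕ) (j : ℕ) :
    |restr E v j| = |restr E w j| := by
  rw [restr_apply, restr_apply]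
  by_cases hj : j ∈ E <;> simp [hj, h j]

/-! #### Basic lemmas about the norm -/

theorem nrm_zero {nrm : C00 → ℝ} (hn : IsNorm nrm) : nrm 0 = 0 := by
  have := hn.2.1 0 0
  simpa using this

theorem nrm_nonneg {nrm : C00 → ℝ} (hn : IsNorm nrm) (v : C00) : 0 ≤ nrm v := by
  by_cases h : v = 0
  · rw [h, nrm_zero hn]
  · exact le_of_lt (hn.2.2 v h)

theorem nrm_sum_le {nrm : C00 → ℝ} (hn : IsNorm nrm) {ι : Type*} (s : Finset ι) (f : ι → C00) :
    nrm (∑ i ∈ s, f i) ≤ ∑ i ∈ s, nrm (f i) := by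
  classical
  induction s using Finset.induction_on with
  | empty => simp [nrm_zero hn]
  | insert _ _ h ih =>
      rw [Finset.sum_insert h, Finset.sum_insert h]
      exact le_trans (hn.1 _ _) (by linarith)

theorem theta_pos {θ : ℕ → ℝ} (hreg : RegularSeq θ) {q : ℕ} (hq : 1 ≤ q) : 0 < θ q :=
  (hreg.1 q hq).1

theorem theta_lt_one {θ : ℕ → ℝ} (hreg : RegularSeq θ) {q : ℕ} (hq : 1 ≤ q) : θ q < 1 :=
  (hreg.1 q hq).2

theorem theta_antitone {θ : ℕ → ℝ} (hreg : RegularSeq θ) {q q' : ℕ} (hq : 1 ≤ q) (hqq' : q ≤ q') :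
    θ q' ≤ θ q := by
  induction q' with
  | zero => omega
  | succ n ih =>
      rcases Nat.lt_or_ge q (n+1) with h | h
      · have hn : q ≤ n := by omega
        have h1n : 1 ≤ n := le_trans hq hn
        exact le_trans (hreg.2.1 n h1n) (ih hn)
      · have : q = n + 1 := by omega
        rw [this]

/-- Elements of an admissible family are pairwise disjoint. -/
theorem admissible_disjoint {S : Set (Finset ℕ)} {m : ℕ} {E : Fin m → Finset ℕ}
    (hE : AdmissibleSets S E) {i j : Fin m} (hij : i ≠ j) {a : ℕ}
    (hi : a ∈ E i) (hj : a ∈ E j) : False := by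
  rcases lt_or_gt_of_ne hij with h | h
  · exact lt_irrefl a (hE.2.1 i j h a hi a hj)
  · exact lt_irrefl a (hE.2.1 j i h a hj a hi)

theorem restr_eBasis (E : Finset ℕ) (a : ℕ) :
    restr E (eBasis a) = if a ∈ E then eBasis a else 0 := by
  classical
  by_cases h : a ∈ E
  · simp only [h, if_true]
    exact restr_of_support_subset (by
      intro j hj
      have hja : j = a := Finset.mem_singleton.1 (Finsupp.support_single_subset hj)
      rwa [hja])
  · simp only [h, if_false]
    exact restr_of_disjoint (by
      intro j hj
      have hja : j = a := Finset.mem_singleton.1 (Finsupp.support_single_subset hj)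
      rwa [hja])

/-- The `ℓ∞` part of the norm equation, for a basis vector. -/
theorem sSup_abs_eBasis (a : ℕ) : sSup {r : ℝ | ∃ j : ℕ, r = |(eBasis a) j|} = 1 := by
  classical
  apply le_antisymm
  · apply Real.sSup_le
    · rintro r ⟨j, rfl⟩
      simp only [eBasis, Finsupp.single_apply]
      by_cases h : a = j <;> simp [h]
    · norm_num
  · apply le_csSup
    · refine ⟨1, ?_⟩
      rintro r ⟨j, rfl⟩
      simp only [eBasis, Finsupp.single_apply]
      by_cases h : a = j <;> simp [h]
    · exact ⟨a, by simp [eBasis]⟩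

theorem eBasis_ne_zero (a : ℕ) : eBasis a ≠ 0 := by
  intro h
  have := DFunLike.congr_fun h a
  simp [eBasis] at this

/-- `‖e_a‖ = 1`. -/
theorem nrm_eBasis {θ : ℕ → ℝ} {nrm : C00 → ℝ} (hreg : RegularSeq θ) (hn : IsNorm nrm)
    (hT : MixedTsirelsonNorm θ nrm) (a : ℕ) : nrm (eBasis a) = 1 := by
  classical
  set s := sSup {r : ℝ | ∃ (q m : ℕ) (E : Fin m → Finset ℕ), 1 ≤ q ∧
        AdmissibleSets (SchreierFam q) E ∧ r = θ q * ∑ i, nrm (restr (E i) (eBasis a))} with hs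
  have heq : nrm (eBasis a) = max 1 s := by
    have := hT (eBasis a)
    rwa [sSup_abs_eBasis a] at this
  have hub : s ≤ θ 1 * nrm (eBasis a) := by
    apply Real.sSup_le
    · rintro r ⟨q, m, E, hq, hE, rfl⟩
      have hsum : (∑ i, nrm (restr (E i) (eBasis a))) ≤ nrm (eBasis a) := by
        by_cases hex : ∃ i, a ∈ E i
        · obtain ⟨i₀, hi₀⟩ := hex
          have : ∀ i ∈ Finset.univ, i ≠ i₀ → nrm (restr (E i) (eBasis a)) = 0 := by
            intro i _ hne
            rw [restr_eBasis]
            have : a ∉ E i := fun h => admissible_disjoint hE hne h hi₀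
            simp [this, nrm_zero hn]
          rw [Finset.sum_eq_single_of_mem i₀ (Finset.mem_univ i₀) this, restr_eBasis]
          simp [hi₀]
        · have : ∀ i, nrm (restr (E i) (eBasis a)) = 0 := by
            intro i
            rw [restr_eBasis]
            have : a ∉ E i := fun h => hex ⟨i, h⟩
            simp [this, nrm_zero hn]
          simp only [this, Finset.sum_const_zero]
          exact nrm_nonneg hn _
      exact mul_le_mul (theta_antitone hreg le_rfl hq) hsum
        (Finset.sum_nonneg fun i _ => nrm_nonneg hn _) (le_of_lt (theta_pos hreg le_rfl))
    · exact mul_nonneg (le_of_lt (theta_pos hreg le_rfl)) (nrm_nonneg hn _)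
  have hpos : 0 < nrm (eBasis a) := hn.2.2 _ (eBasis_ne_zero a)
  have hth1 : θ 1 < 1 := theta_lt_one hreg le_rfl
  rcases le_or_gt s 1 with h | h
  · rw [heq, max_eq_left h]
  · exfalso
    have : nrm (eBasis a) = s := by rw [heq, max_eq_right (le_of_lt h)]
    nlinarith

theorem nrm_single {θ : ℕ → ℝ} {nrm : C00 → ℝ} (hreg : RegularSeq θ) (hn : IsNorm nrm)
    (hT : MixedTsirelsonNorm θ nrm) (a : ℕ) (c : ℝ) : nrm (Finsupp.single a c) = |c| := by
  have h1 : Finsupp.single a c = c • eBasis a := by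
    rw [eBasis, Finsupp.smul_single', mul_one]
  rw [h1, hn.2.1, nrm_eBasis hreg hn hT, mul_one]

theorem nrm_le_l1 {θ : ℕ → ℝ} {nrm : C00 → ℝ} (hreg : RegularSeq θ) (hn : IsNorm nrm)
    (hT : MixedTsirelsonNorm θ nrm) (x : C00) : nrm x ≤ ∑ j ∈ x.support, |x j| := by
  have hx : x = ∑ j ∈ x.support, Finsupp.single j (x j) := (Finsupp.sum_single x).symm
  calc nrm x = nrm (∑ j ∈ x.support, Finsupp.single j (x j)) := by rw [← hx]
    _ ≤ ∑ j ∈ x.support, nrm (Finsupp.single j (x j)) := nrm_sum_le hn _ _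
    _ = ∑ j ∈ x.support, |x j| := by
        apply Finset.sum_congr rfl
        intro j _
        exact nrm_single hreg hn hT j (x j)

/-- Every element of the admissible-sum set is bounded by the `ℓ1` norm. -/
theorem bset_le_l1 {θ : ℕ → ℝ} {nrm : C00 → ℝ} (hreg : RegularSeq θ) (hn : IsNorm nrm)
    (hT : MixedTsirelsonNorm θ nrm) (x : C00) :
    ∀ r ∈ {r : ℝ | ∃ (q m : ℕ) (E : Fin m → Finset ℕ), 1 ≤ q ∧
        AdmissibleSets (SchreierFam q) E ∧ r = θ q * ∑ i, nrm (restr (E i) x)},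
      r ≤ ∑ j ∈ x.support, |x j| := by
  classical
  rintro r ⟨q, m, E, hq, hE, rfl⟩
  have hterm : ∀ i : Fin m, nrm (restr (E i) x) ≤
      ∑ j ∈ x.support.filter (fun j => j ∈ E i), |x j| := by
    intro i
    refine le_trans (nrm_le_l1 hreg hn hT _) (le_of_eq ?_)
    rw [restr_support]
    apply Finset.sum_congr rfl
    intro j hj
    rw [restr_apply]
    simp only [Finset.mem_filter] at hj
    simp [hj.2]
  have hdisj : ((Finset.univ : Finset (Fin m)) : Set (Fin m)).PairwiseDisjoint
      (fun i => x.support.filter (fun j => j ∈ E i)) := by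
    intro i _ j _ hij
    simp only [Function.onFun]
    rw [Finset.disjoint_left]
    intro a hai haj
    simp only [Finset.mem_filter] at hai haj
    exact admissible_disjoint hE hij hai.2 haj.2
  have hsum2 : ∑ i : Fin m, ∑ j ∈ x.support.filter (fun j => j ∈ E i), |x j| ≤
      ∑ j ∈ x.support, |x j| := by
    rw [← Finset.sum_biUnion hdisj]
    apply Finset.sum_le_sum_of_subset_of_nonneg
    · intro a ha
      rw [Finset.mem_biUnion] at ha
      obtain ⟨i, _, hai⟩ := ha
      exact (Finset.mem_filter.1 hai).1
    · intro j _ _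
      exact abs_nonneg _
  have h1 : ∑ i : Fin m, nrm (restr (E i) x) ≤ ∑ j ∈ x.support, |x j| :=
    le_trans (Finset.sum_le_sum fun i _ => hterm i) hsum2
  have h2 : (0:ℝ) ≤ ∑ i : Fin m, nrm (restr (E i) x) :=
    Finset.sum_nonneg fun i _ => nrm_nonneg hn _
  nlinarith [theta_pos hreg hq, theta_lt_one hreg hq]

/-- The fundamental lower estimate: the norm dominates every admissible weighted sum. -/
theorem nrm_ge_admissible {θ : ℕ → ℝ} {nrm : C00 → ℝ} (hreg : RegularSeq θ) (hn : IsNorm nrm)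
    (hT : MixedTsirelsonNorm θ nrm) (x : C00) {q m : ℕ} {E : Fin m → Finset ℕ}
    (hq : 1 ≤ q) (hE : AdmissibleSets (SchreierFam q) E) :
    θ q * ∑ i, nrm (restr (E i) x) ≤ nrm x := by
  rw [hT x]
  refine le_trans ?_ (le_max_right _ _)
  apply le_csSup
  · exact ⟨∑ j ∈ x.support, |x j|, bset_le_l1 hreg hn hT x⟩
  · exact ⟨q, m, E, hq, hE, rfl⟩

theorem sSup_bset_le_nrm {θ : ℕ → ℝ} {nrm : C00 → ℝ}
    (hT : MixedTsirelsonNorm θ nrm) (x : C00) :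
    sSup {r : ℝ | ∃ (q m : ℕ) (E : Fin m → Finset ℕ), 1 ≤ q ∧
        AdmissibleSets (SchreierFam q) E ∧ r = θ q * ∑ i, nrm (restr (E i) x)} ≤ nrm x := by
  rw [hT x]; exact le_max_right _ _

theorem sSup_abs_le_nrm {θ : ℕ → ℝ} {nrm : C00 → ℝ}
    (hT : MixedTsirelsonNorm θ nrm) (x : C00) :
    sSup {r : ℝ | ∃ j : ℕ, r = |x j|} ≤ nrm x := by
  rw [hT x]; exact le_max_left _ _

/-! #### Unconditionality of the mixed Tsirelson norm -/

theorem support_eq_of_abs_eq {v w : C00} (h : ∀ j, |v j| = |w j|) : v.support = w.support := by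
  ext j
  simp only [Finsupp.mem_support_iff]
  constructor
  · intro hv hw
    rw [← abs_eq_zero] at hw
    rw [← h j, abs_eq_zero] at hw
    exact hv hw
  · intro hw hv
    rw [← abs_eq_zero] at hv
    rw [h j, abs_eq_zero] at hv
    exact hw hv

theorem nrm_uncond_aux {θ : ℕ → ℝ} {nrm : C00 → ℝ} (hreg : RegularSeq θ) (hn : IsNorm nrm)
    (hT : MixedTsirelsonNorm θ nrm) :
    ∀ (n : ℕ) (v w : C00), v.support.card ≤ n → (∀ j, |v j| = |w j|) → nrm v ≤ nrm w := by
  classical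
  intro n
  induction n with
  | zero =>
      intro v w hcard _
      have : v.support = ∅ := Finset.card_eq_zero.1 (Nat.le_zero.1 hcard)
      have hv : v = 0 := by
        ext j
        by_contra hne
        have : j ∈ v.support := Finsupp.mem_support_iff.2 (by simpa using hne)
        simp_all
      rw [hv, nrm_zero hn]
      exact nrm_nonneg hn w
  | succ n IH =>
      intro v w hcard h
      have hsupp : v.support = w.support := support_eq_of_abs_eq h
      have key : nrm v ≤ max (θ 1 * nrm v) (nrm w) := by
        conv_lhs => rw [hT v]
        apply max_le
        · refine le_trans (le_of_eq ?_) (le_trans (sSup_abs_le_nrm hT w) (le_max_right _ _))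
          congr 1
          ext r
          constructor <;> rintro ⟨j, rfl⟩
          · exact ⟨j, h j⟩
          · exact ⟨j, (h j).symm⟩
        · apply Real.sSup_le
          · rintro r ⟨q, m, E, hq, hE, rfl⟩
            by_cases hfull : ∃ i, v.support ⊆ E i
            · obtain ⟨i₀, hi₀⟩ := hfull
              have hz : ∀ i ∈ Finset.univ, i ≠ i₀ → nrm (restr (E i) v) = 0 := by
                intro i _ hne
                rw [restr_of_disjoint, nrm_zero hn]
                intro j hj hjEi
                exact admissible_disjoint hE hne hjEi (hi₀ hj)
              rw [Finset.sum_eq_single_of_mem i₀ (Finset.mem_univ i₀) hz,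
                restr_of_support_subset hi₀]
              refine le_trans ?_ (le_max_left _ _)
              exact mul_le_mul (theta_antitone hreg le_rfl hq) le_rfl (nrm_nonneg hn v)
                (le_of_lt (theta_pos hreg le_rfl))
            · push_neg at hfull
              have hpieces : ∀ i : Fin m, nrm (restr (E i) v) = nrm (restr (E i) w) := by
                intro i
                obtain ⟨a, ha, haE⟩ := Finset.not_subset.1 (hfull i)
                have hcards : ∀ u : C00, u.support = v.support →
                    (restr (E i) u).support.card ≤ n := by
                  intro u hu
                  rw [restr_support, hu]
                  have hss : v.support.filter (fun j => j ∈ E i) ⊂ v.support := by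
                    rw [Finset.ssubset_iff_of_subset (Finset.filter_subset _ _)]
                    exact ⟨a, ha, fun hmem => haE (Finset.mem_filter.1 hmem).2⟩
                  have := Finset.card_lt_card hss
                  omega
                apply le_antisymm
                · exact IH _ _ (hcards v rfl) (abs_restr_eq h (E i))
                · exact IH _ _ (hcards w hsupp.symm) (abs_restr_eq (fun j => (h j).symm) (E i))
              have hr : θ q * ∑ i, nrm (restr (E i) v) = θ q * ∑ i, nrm (restr (E i) w) := by
                congr 1
                exact Finset.sum_congr rfl fun i _ => hpieces i
              rw [hr]
              refine le_trans ?_ (le_max_right _ _)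
              refine le_trans (le_csSup ⟨∑ j ∈ w.support, |w j|, bset_le_l1 hreg hn hT w⟩
                ⟨q, m, E, hq, hE, rfl⟩) (sSup_bset_le_nrm hT w)
          · exact le_trans (nrm_nonneg hn w) (le_max_right _ _)
      rcases max_cases (θ 1 * nrm v) (nrm w) with ⟨heq, _⟩ | ⟨heq, _⟩
      · rw [heq] at key
        nlinarith [theta_lt_one hreg (le_refl 1), theta_pos hreg (le_refl 1),
          nrm_nonneg hn v, nrm_nonneg hn w]
      · rwa [heq] at key

/-- The mixed Tsirelson norm is 1-unconditional. -/
theorem nrm_uncond {θ : ℕ → ℝ} {nrm : C00 → ℝ} (hreg : RegularSeq θ) (hn : IsNorm nrm)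
    (hT : MixedTsirelsonNorm θ nrm) :
    ∀ v w : C00, (∀ j, |v j| = |w j|) → nrm v = nrm w := by
  intro v w h
  exact le_antisymm (nrm_uncond_aux hreg hn hT _ v w le_rfl h)
    (nrm_uncond_aux hreg hn hT _ w v le_rfl fun j => (h j).symm)

/-! #### Schreier family lemmas -/

theorem schreier_empty (D : ℕ) : (∅ : Finset ℕ) ∈ SchreierFam D := by
  cases D with
  | zero => simp [SchreierFam]
  | succ n =>
      refine ⟨0, Fin.elim0, fun i => i.elim0, fun i => i.elim0, fun i => i.elim0, ?_⟩
      simp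

theorem schreier_singleton {a : ℕ} (ha : 1 ≤ a) (D : ℕ) :
    ({a} : Finset ℕ) ∈ SchreierFam D := by
  induction D with
  | zero => simp [SchreierFam]
  | succ n IH =>
      refine ⟨1, fun _ => {a}, fun _ => IH, ?_, ?_, ?_⟩
      · intro i j hij
        exact absurd (Fin.lt_iff_val_lt_val.mp hij) (by omega)
      · intro i b hb
        rw [Finset.mem_singleton] at hb
        omega
      · ext b; simp

theorem schreier_union {D m : ℕ} {M : Fin m → Finset ℕ}
    (h1 : ∀ i, M i ∈ SchreierFam D)
    (h2 : ∀ i j : Fin m, i < j → FinLt (M i) (M j))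
    (h3 : ∀ i, ∀ a ∈ M i, m ≤ a) :
    Finset.univ.biUnion M ∈ SchreierFam (D + 1) :=
  ⟨m, M, h1, h2, h3, rfl⟩

/-! #### Admissible trees -/

/-- A finitely-branching tree with finite sets of naturals at the leaves. -/
inductive MTree : Type where
  | leaf : Finset ℕ → MTree
  | node : (m : ℕ) → (Fin m → MTree) → MTree

namespace MTree

/-- The collection of leaf labels of a tree. -/
def leafSet : MTree → Set (Finset ℕ)
  | leaf E => {E}
  | node _ f => ⋃ i, leafSet (f i)

/-- Validity: leaf labels avoid `0`, sibling subtrees are successively ordered,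
and the branching degree is at most every element appearing below the node. -/
def Valid : MTree → Prop
  | leaf E => ∀ a ∈ E, 1 ≤ a
  | node m f => (∀ i, Valid (f i)) ∧
      (∀ i j : Fin m, i < j → ∀ E ∈ leafSet (f i), ∀ F ∈ leafSet (f j), FinLt E F) ∧
      (∀ i : Fin m, ∀ E ∈ leafSet (f i), ∀ a ∈ E, m ≤ a)

/-- The value of a tree on a vector: each level multiplies by `lam`. -/
def val (nrm : C00 → ℝ) (lam : ℝ) (x : C00) : MTree → ℝ
  | leaf E => nrm (restr E x)
  | node _ f => lam * ∑ i, val nrm lam x (f i)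

/-- Depth of a tree. -/
def dep : MTree → ℕ
  | leaf _ => 0
  | node _ f => 1 + Finset.univ.sup fun i => dep (f i)

/-- The (ordered) list of nonempty leaf labels at depth `< D`. -/
def LB : ℕ → MTree → List (Finset ℕ)
  | 0, _ => []
  | _+1, leaf E => if E = ∅ then [] else [E]
  | D+1, node _ f => (List.ofFn fun i => LB D (f i)).flatten

theorem mem_LB {D : ℕ} {t : MTree} {E' : Finset ℕ} (h : E' ∈ LB D t) :
    E' ∈ leafSet t ∧ E' ≠ ∅ := by
  induction D generalizing t with
  | zero => simp [LB] at h
  | succ D IH =>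
      cases t with
      | leaf E =>
          by_cases hE : E = ∅
          · simp [LB, hE] at h
          · simp [LB, hE] at h
            subst h
            exact ⟨rfl, hE⟩
      | node m f =>
          simp only [LB, List.mem_flatten, List.mem_ofFn] at h
          obtain ⟨l, ⟨i, rfl⟩, hl⟩ := h
          obtain ⟨h1, h2⟩ := IH hl
          exact ⟨Set.mem_iUnion.2 ⟨i, h1⟩, h2⟩

theorem val_nonneg {nrm : C00 → ℝ} (hn : IsNorm nrm) {lam : ℝ} (hlam : 0 ≤ lam)
    (x : C00) (t : MTree) : 0 ≤ val nrm lam x t := by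
  induction t with
  | leaf E => exact nrm_nonneg hn _
  | node m f IH =>
      exact mul_nonneg hlam (Finset.sum_nonneg fun i _ => IH i)

theorem val_congr {nrm : C00 → ℝ} {lam : ℝ} {x y : C00} {t : MTree}
    (h : ∀ E ∈ leafSet t, restr E x = restr E y) :
    val nrm lam x t = val nrm lam y t := by
  induction t with
  | leaf E => simp only [val]; rw [h E rfl]
  | node m f IH =>
      simp only [val]
      congr 1
      apply Finset.sum_congr rfl
      intro i _
      exact IH i fun E hE => h E (Set.mem_iUnion.2 ⟨i, hE⟩)

/-- Intersect all leaf labels with `S`. -/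
def restrT (S : Finset ℕ) : MTree → MTree
  | leaf E => leaf (E ∩ S)
  | node m f => node m fun i => restrT S (f i)

theorem leafSet_restrT {S : Finset ℕ} {t : MTree} {E' : Finset ℕ} :
    E' ∈ leafSet (restrT S t) ↔ ∃ E ∈ leafSet t, E' = E ∩ S := by
  induction t with
  | leaf E =>
      simp [restrT, leafSet]
  | node m f IH =>
      simp only [restrT, leafSet, Set.mem_iUnion]
      constructor
      · rintro ⟨i, hi⟩
        obtain ⟨E, hE, rfl⟩ := (IH i).1 hi
        exact ⟨E, ⟨i, hE⟩, rfl⟩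
      · rintro ⟨E, ⟨i, hE⟩, rfl⟩
        exact ⟨i, (IH i).2 ⟨E, hE, rfl⟩⟩

theorem valid_restrT {S : Finset ℕ} {t : MTree} (h : Valid t) : Valid (restrT S t) := by
  induction t with
  | leaf E =>
      intro a ha
      exact h a (Finset.mem_inter.1 ha).1
  | node m f IH =>
      refine ⟨fun i => IH i (h.1 i), ?_, ?_⟩
      · intro i j hij E hE F hF
        obtain ⟨E₀, hE₀, rfl⟩ := leafSet_restrT.1 hE
        obtain ⟨F₀, hF₀, rfl⟩ := leafSet_restrT.1 hF
        intro a ha b hb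
        exact h.2.1 i j hij E₀ hE₀ F₀ hF₀ a (Finset.mem_inter.1 ha).1 b (Finset.mem_inter.1 hb).1
      · intro i E hE a ha
        obtain ⟨E₀, hE₀, rfl⟩ := leafSet_restrT.1 hE
        exact h.2.2 i E₀ hE₀ a (Finset.mem_inter.1 ha).1

theorem val_restrT {nrm : C00 → ℝ} {lam : ℝ} {x : C00} {S : Finset ℕ}
    (h : x.support ⊆ S) (t : MTree) :
    val nrm lam x (restrT S t) = val nrm lam x t := by
  induction t with
  | leaf E =>
      simp only [restrT, val]
      rw [restr_inter_of_support_subset h]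
  | node m f IH =>
      simp only [restrT, val]
      congr 1
      exact Finset.sum_congr rfl fun i _ => IH i

/-- The sum of the norms of the restrictions to the leaves at depth `< D`. -/
def SL (nrm : C00 → ℝ) (x : C00) (D : ℕ) (t : MTree) : ℝ :=
  ((LB D t).map fun E => nrm (restr E x)).sum

theorem SL_nonneg {nrm : C00 → ℝ} (hn : IsNorm nrm) (x : C00) (D : ℕ) (t : MTree) :
    0 ≤ SL nrm x D t := by
  apply List.sum_nonneg
  intro r hr
  rw [List.mem_map] at hr
  obtain ⟨E, _, rfl⟩ := hr
  exact nrm_nonneg hn _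

theorem SL_node {nrm : C00 → ℝ} (x : C00) (D m : ℕ) (f : Fin m → MTree) :
    SL nrm x (D + 1) (node m f) = ∑ i, SL nrm x D (f i) := by
  show ((List.ofFn fun i => LB D (f i)).flatten.map fun E => nrm (restr E x)).sum = _
  rw [List.map_flatten, List.map_ofFn, List.sum_flatten, List.map_ofFn, List.sum_ofFn]
  rfl

theorem minima_LB_mem {t : MTree} (hv : Valid t) (D : ℕ) :
    ((LB D t).map fun E : Finset ℕ => sInf (E : Set ℕ)).toFinset ∈ SchreierFam D := by
  induction t generalizing D with
  | leaf E =>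
      cases D with
      | zero => simpa [LB] using schreier_empty 0
      | succ D =>
          by_cases hE : E = ∅
          · simpa [LB, hE] using schreier_empty (D + 1)
          · have hne : (E : Set ℕ).Nonempty := by
              rw [Finset.coe_nonempty]
              exact Finset.nonempty_iff_ne_empty.2 hE
            have hmem : sInf (E : Set ℕ) ∈ E := Nat.sInf_mem hne
            have h1 : 1 ≤ sInf (E : Set ℕ) := hv _ hmem
            simpa [LB, hE] using schreier_singleton h1 (D + 1)
  | node m f IH =>
      cases D with
      | zero => simpa [LB] using schreier_empty 0
      | succ D =>
          have heq : ((LB (D + 1) (node m f)).map fun E : Finset ℕ => sInf (E : Set ℕ)).toFinset =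
              Finset.univ.biUnion fun i =>
                ((LB D (f i)).map fun E : Finset ℕ => sInf (E : Set ℕ)).toFinset := by
            ext a
            simp only [List.mem_toFinset, List.mem_map, Finset.mem_biUnion, Finset.mem_univ,
              true_and, LB, List.mem_flatten, List.mem_ofFn]
            constructor
            · rintro ⟨E, ⟨l, ⟨i, rfl⟩, hl⟩, rfl⟩
              exact ⟨i, E, hl, rfl⟩
            · rintro ⟨i, E, hE, rfl⟩
              exact ⟨E, ⟨LB D (f i), ⟨i, rfl⟩, hE⟩, rfl⟩
          rw [heq]
          apply schreier_union
          · intro i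
            exact IH i (hv.1 i) D
          · intro i j hij
            intro a ha b hb
            simp only [List.mem_toFinset, List.mem_map] at ha hb
            obtain ⟨E, hE, rfl⟩ := ha
            obtain ⟨F, hF, rfl⟩ := hb
            obtain ⟨hE1, hE2⟩ := mem_LB hE
            obtain ⟨hF1, hF2⟩ := mem_LB hF
            have hEne : (E : Set ℕ).Nonempty := by
              rw [Finset.coe_nonempty]; exact Finset.nonempty_iff_ne_empty.2 hE2
            have hFne : (F : Set ℕ).Nonempty := by
              rw [Finset.coe_nonempty]; exact Finset.nonempty_iff_ne_empty.2 hF2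
            exact hv.2.1 i j hij E hE1 F hF1 _ (Nat.sInf_mem hEne) _ (Nat.sInf_mem hFne)
          · intro i a ha
            simp only [List.mem_toFinset, List.mem_map] at ha
            obtain ⟨E, hE, rfl⟩ := ha
            obtain ⟨hE1, hE2⟩ := mem_LB hE
            have hEne : (E : Set ℕ).Nonempty := by
              rw [Finset.coe_nonempty]; exact Finset.nonempty_iff_ne_empty.2 hE2
            exact hv.2.2 i E hE1 _ (Nat.sInf_mem hEne)

theorem pairwise_LB {t : MTree} (hv : Valid t) (D : ℕ) : (LB D t).Pairwise FinLt := by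
  induction t generalizing D with
  | leaf E =>
      cases D with
      | zero => simp [LB]
      | succ D =>
          by_cases hE : E = ∅ <;> simp [LB, hE]
  | node m f IH =>
      cases D with
      | zero => simp [LB]
      | succ D =>
          show ((List.ofFn fun i => LB D (f i)).flatten).Pairwise FinLt
          rw [List.pairwise_flatten]
          refine ⟨?_, ?_⟩
          · intro l hl
            rw [List.mem_ofFn] at hl
            obtain ⟨i, rfl⟩ := hl
            exact IH i (hv.1 i) D
          · rw [List.pairwise_ofFn]
            intro i j hij
            intro E hE F hF
            obtain ⟨hE1, _⟩ := mem_LB hE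
            obtain ⟨hF1, _⟩ := mem_LB hF
            exact hv.2.1 i j hij E hE1 F hF1

/-- The windowed estimate: the value of a tree at offset `r` is controlled by the
window sums of the leaf norms. -/
theorem st_bound {nrm : C00 → ℝ} (hn : IsNorm nrm) {lam : ℝ} (hl0 : 0 ≤ lam) (hl1 : lam ≤ 1)
    {N : ℕ} (hN : 1 ≤ N) (x : C00) :
    ∀ (t : MTree) (r M : ℕ), r < N → t.dep + 1 ≤ M →
      lam ^ r * val nrm lam x t ≤
        ∑ k ∈ Finset.range M, lam ^ (k * N) * SL nrm x ((k + 1) * N - r) t := by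
  intro t
  induction t with
  | leaf E =>
      intro r M hr hM
      have hM1 : 0 ∈ Finset.range M := by
        simp only [Finset.mem_range]; omega
      have hterm : lam ^ r * val nrm lam x (leaf E) ≤
          lam ^ (0 * N) * SL nrm x ((0 + 1) * N - r) (leaf E) := by
        by_cases hE : E = ∅
        · have hz : restr E x = 0 := restr_of_disjoint (by simp [hE])
          have : val nrm lam x (leaf E) = 0 := by
            simp only [val, hz, nrm_zero hn]
          rw [this, mul_zero]
          exact mul_nonneg (pow_nonneg hl0 _) (SL_nonneg hn x _ _)
        · obtain ⟨D', hD'⟩ : ∃ D', (0 + 1) * N - r = D' + 1 := ⟨N - r - 1, by omega⟩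
          rw [hD']
          have hSL : SL nrm x (D' + 1) (leaf E) = nrm (restr E x) := by
            simp [SL, LB, hE]
          rw [hSL]
          simp only [val, zero_mul, pow_zero, one_mul]
          calc lam ^ r * nrm (restr E x) ≤ 1 * nrm (restr E x) :=
                mul_le_mul_of_nonneg_right (pow_le_one₀ hl0 hl1) (nrm_nonneg hn _)
            _ = nrm (restr E x) := one_mul _
      refine le_trans hterm (Finset.single_le_sum
        (f := fun k => lam ^ (k * N) * SL nrm x ((k + 1) * N - r) (leaf E)) ?_ hM1)
      intro k _
      exact mul_nonneg (pow_nonneg hl0 _) (SL_nonneg hn x _ _)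
  | node m f IH =>
      intro r M hr hM
      have hdep : ∀ i, dep (f i) + 1 ≤ dep (node m f) := by
        intro i
        have h1 : dep (f i) ≤ Finset.univ.sup fun j => dep (f j) :=
          Finset.le_sup (f := fun j => dep (f j)) (Finset.mem_univ i)
        show dep (f i) + 1 ≤ 1 + Finset.univ.sup fun j => dep (f j)
        omega
      have hval : lam ^ r * val nrm lam x (node m f)
          = ∑ i, lam ^ (r + 1) * val nrm lam x (f i) := by
        simp only [val]
        rw [← mul_assoc, ← pow_succ, Finset.mul_sum]
      rw [hval]
      by_cases hc : r + 1 < N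
      · have key : ∀ i, lam ^ (r + 1) * val nrm lam x (f i) ≤
            ∑ k ∈ Finset.range M, lam ^ (k * N) * SL nrm x ((k + 1) * N - (r + 1)) (f i) :=
          fun i => IH i (r + 1) M hc (le_trans (hdep i) (by omega))
        calc ∑ i, lam ^ (r + 1) * val nrm lam x (f i)
            ≤ ∑ i, ∑ k ∈ Finset.range M, lam ^ (k * N) * SL nrm x ((k + 1) * N - (r + 1)) (f i) :=
              Finset.sum_le_sum fun i _ => key i
          _ = ∑ k ∈ Finset.range M, ∑ i, lam ^ (k * N) * SL nrm x ((k + 1) * N - (r + 1)) (f i) :=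
              Finset.sum_comm
          _ = ∑ k ∈ Finset.range M, lam ^ (k * N) * SL nrm x ((k + 1) * N - r) (node m f) := by
              apply Finset.sum_congr rfl
              intro k _
              rw [← Finset.mul_sum, ← SL_node]
              congr 2
              have hNle : N ≤ (k + 1) * N := Nat.le_mul_of_pos_left N (by omega)
              have h1 : (k + 1) * N = k * N + N := by ring
              rw [h1] at hNle ⊢
              generalize k * N = K at *
              omega
      · have hrN : r + 1 = N := by omega
        have hM1 : 1 ≤ M := by omega
        have key : ∀ i, val nrm lam x (f i) ≤
            ∑ k ∈ Finset.range (M - 1), lam ^ (k * N) * SL nrm x ((k + 1) * N) (f i) := by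
          intro i
          have := IH i 0 (M - 1) (by omega) (by have := hdep i; omega)
          simpa using this
        have step1 : ∑ i, lam ^ (r + 1) * val nrm lam x (f i) ≤
            ∑ k ∈ Finset.range (M - 1),
              lam ^ ((k + 1) * N) * SL nrm x ((k + 1) * N + 1) (node m f) := by
          calc ∑ i, lam ^ (r + 1) * val nrm lam x (f i)
              ≤ ∑ i, lam ^ (r + 1) *
                  ∑ k ∈ Finset.range (M - 1), lam ^ (k * N) * SL nrm x ((k + 1) * N) (f i) :=
                Finset.sum_le_sum fun i _ =>
                  mul_le_mul_of_nonneg_left (key i) (pow_nonneg hl0 _)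
            _ = ∑ k ∈ Finset.range (M - 1), ∑ i,
                  lam ^ (r + 1) * (lam ^ (k * N) * SL nrm x ((k + 1) * N) (f i)) := by
                rw [← Finset.sum_comm]
                apply Finset.sum_congr rfl
                intro i _
                rw [Finset.mul_sum]
            _ = ∑ k ∈ Finset.range (M - 1),
                  lam ^ ((k + 1) * N) * SL nrm x ((k + 1) * N + 1) (node m f) := by
                apply Finset.sum_congr rfl
                intro k _
                rw [SL_node x ((k + 1) * N) m f, Finset.mul_sum]
                apply Finset.sum_congr rfl
                intro i _
                rw [← mul_assoc, ← pow_add]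
                congr 2
                rw [hrN]; ring
        refine le_trans step1 ?_
        have hsplit : ∑ k ∈ Finset.range M, lam ^ (k * N) * SL nrm x ((k + 1) * N - r) (node m f)
            = (∑ k ∈ Finset.range (M - 1),
                lam ^ ((k + 1) * N) * SL nrm x ((k + 2) * N - r) (node m f))
              + lam ^ (0 * N) * SL nrm x ((0 + 1) * N - r) (node m f) := by
          conv_lhs => rw [show M = (M - 1) + 1 by omega]
          rw [Finset.sum_range_succ']
        rw [hsplit]
        have harith : ∀ k : ℕ, (k + 2) * N - r = (k + 1) * N + 1 := by
          intro k
          have h1 : (k + 2) * N = k * N + N + N := by ring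
          have h2 : (k + 1) * N = k * N + N := by ring
          rw [h1, h2]
          generalize k * N = K
          omega
        have hge : (0:ℝ) ≤ lam ^ (0 * N) * SL nrm x ((0 + 1) * N - r) (node m f) :=
          mul_nonneg (pow_nonneg hl0 _) (SL_nonneg hn x _ _)
        have heqs : ∑ k ∈ Finset.range (M - 1),
              lam ^ ((k + 1) * N) * SL nrm x ((k + 2) * N - r) (node m f)
            = ∑ k ∈ Finset.range (M - 1),
              lam ^ ((k + 1) * N) * SL nrm x ((k + 1) * N + 1) (node m f) := by
          apply Finset.sum_congr rfl
          intro k _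
          rw [harith k]
        rw [heqs]
        linarith

end MTree

/-- The list form of the fundamental lower estimate. -/
theorem nrm_ge_list {θ : ℕ → ℝ} {nrm : C00 → ℝ} (hreg : RegularSeq θ) (hn : IsNorm nrm)
    (hT : MixedTsirelsonNorm θ nrm) (x : C00) {q : ℕ} (hq : 1 ≤ q)
    (L : List (Finset ℕ))
    (h1 : ∀ E ∈ L, E ≠ ∅)
    (h2 : L.Pairwise FinLt)
    (h3 : ((L.map fun E : Finset ℕ => sInf (E : Set ℕ)).toFinset ∈ SchreierFam q)) :
    θ q * (L.map fun E => nrm (restr E x)).sum ≤ nrm x := by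
  classical
  have hconv : (L.map fun E => nrm (restr E x)).sum
      = ∑ i : Fin L.length, nrm (restr (L.get i) x) := by
    conv_lhs => rw [← List.ofFn_get L, List.map_ofFn, List.sum_ofFn]
    rfl
  rw [hconv]
  apply nrm_ge_admissible hreg hn hT x hq
  refine ⟨?_, ?_, ?_⟩
  · intro i
    exact Finset.nonempty_iff_ne_empty.2 (h1 _ (L.get_mem i))
  · intro i j hij
    exact List.pairwise_iff_get.1 h2 i j hij
  · have : (Finset.univ.image fun i : Fin L.length => sInf ((L.get i : Finset ℕ) : Set ℕ))
        = (L.map fun E : Finset ℕ => sInf (E : Set ℕ)).toFinset := by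
      ext a
      simp only [Finset.mem_image, Finset.mem_univ, true_and, List.mem_toFinset, List.mem_map]
      constructor
      · rintro ⟨i, rfl⟩
        exact ⟨L.get i, L.get_mem i, rfl⟩
      · rintro ⟨E, hE, rfl⟩
        obtain ⟨i, hi, rfl⟩ := List.mem_iff_get.1 hE
        exact ⟨i, rfl⟩
    rw [this]
    exact h3

theorem theta_pow_mul {θ : ℕ → ℝ} (hreg : RegularSeq θ) {ρ : ℝ} (hρ : 0 ≤ ρ) {N : ℕ}
    (hN : 1 ≤ N) (hbase : ρ ^ N ≤ θ N) : ∀ k : ℕ, ρ ^ ((k + 1) * N) ≤ θ ((k + 1) * N) := by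
  intro k
  induction k with
  | zero => simpa using hbase
  | succ k IH =>
      have h1 : (k + 2) * N = (k + 1) * N + N := by ring
      have h2 : ρ ^ ((k + 2) * N) = ρ ^ ((k + 1) * N) * ρ ^ N := by
        rw [h1, pow_add]
      rw [h1]
      calc ρ ^ ((k + 1) * N + N) = ρ ^ ((k + 1) * N) * ρ ^ N := pow_add ρ _ _
        _ ≤ θ ((k + 1) * N) * θ N := by
            apply mul_le_mul IH hbase (pow_nonneg hρ _)
            exact le_of_lt (theta_pos hreg (le_trans hN (Nat.le_mul_of_pos_left N (by omega))))
        _ ≤ θ ((k + 1) * N + N) := hreg.2.2.2 _ _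
            (le_trans hN (Nat.le_mul_of_pos_left N (by omega))) hN

namespace MTree

/-- The central comparison estimate: the value of any valid tree is dominated by a
multiple of the mixed Tsirelson norm. -/
theorem val_le_nrm {θ : ℕ → ℝ} {nrm : C00 → ℝ} (hreg : RegularSeq θ) (hn : IsNorm nrm)
    (hT : MixedTsirelsonNorm θ nrm) {lam ρ : ℝ} {N : ℕ} (hN : 1 ≤ N)
    (hl0 : 0 < lam) (hl1 : lam ≤ 1) (hlρ : lam < ρ) (hbase : ρ ^ N ≤ θ N)
    (x : C00) {t : MTree} (hv : Valid t) :
    val nrm lam x t ≤ (1 - lam ^ N / ρ ^ N)⁻¹ * ((ρ ^ N)⁻¹ * nrm x) := by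
  have hρ0 : 0 < ρ := lt_trans hl0 hlρ
  have hρN : 0 < ρ ^ N := pow_pos hρ0 N
  set b : ℝ := lam ^ N / ρ ^ N with hb
  have hb0 : 0 ≤ b := div_nonneg (pow_nonneg (le_of_lt hl0) _) (le_of_lt hρN)
  have hb1 : b < 1 := by
    rw [hb, div_lt_one hρN]
    exact pow_lt_pow_left₀ hlρ (le_of_lt hl0) (by omega)
  set M := dep t + 1 with hM
  have h0 := st_bound hn (le_of_lt hl0) hl1 hN x t 0 M (by omega) le_rfl
  rw [pow_zero, one_mul] at h0
  have hSLk : ∀ k : ℕ, SL nrm x ((k + 1) * N - 0) t ≤ (ρ ^ ((k + 1) * N))⁻¹ * nrm x := by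
    intro k
    rw [Nat.sub_zero]
    have hq1 : 1 ≤ (k + 1) * N := le_trans hN (Nat.le_mul_of_pos_left N (by omega))
    have hθ := nrm_ge_list hreg hn hT x hq1 (LB ((k + 1) * N) t)
      (fun E hE => (mem_LB hE).2) (pairwise_LB hv _) (minima_LB_mem hv _)
    have hθρ : ρ ^ ((k + 1) * N) ≤ θ ((k + 1) * N) := theta_pow_mul hreg (le_of_lt hρ0) hN hbase k
    have hSLnn : 0 ≤ SL nrm x ((k + 1) * N) t := SL_nonneg hn x _ _
    have h2 : ρ ^ ((k + 1) * N) * SL nrm x ((k + 1) * N) t ≤ nrm x := by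
      calc ρ ^ ((k + 1) * N) * SL nrm x ((k + 1) * N) t
          ≤ θ ((k + 1) * N) * SL nrm x ((k + 1) * N) t :=
            mul_le_mul_of_nonneg_right hθρ hSLnn
        _ ≤ nrm x := hθ
    have hρk : (0:ℝ) < ρ ^ ((k + 1) * N) := pow_pos hρ0 _
    rw [inv_mul_eq_div, le_div_iff₀ hρk]
    linarith [h2]
  have hterm : ∀ k : ℕ, lam ^ (k * N) * SL nrm x ((k + 1) * N - 0) t
      ≤ b ^ k * ((ρ ^ N)⁻¹ * nrm x) := by
    intro k
    have h1 : lam ^ (k * N) * SL nrm x ((k + 1) * N - 0) t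
        ≤ lam ^ (k * N) * ((ρ ^ ((k + 1) * N))⁻¹ * nrm x) :=
      mul_le_mul_of_nonneg_left (hSLk k) (pow_nonneg (le_of_lt hl0) _)
    refine le_trans h1 (le_of_eq ?_)
    rw [hb]
    rw [show (k + 1) * N = k * N + N by ring, pow_add, pow_mul, pow_mul, div_pow]
    field_simp
    ring
  have hsum : val nrm lam x t ≤ ∑ k ∈ Finset.range M, b ^ k * ((ρ ^ N)⁻¹ * nrm x) :=
    le_trans h0 (Finset.sum_le_sum fun k _ => hterm k)
  have hgeom : ∑ k ∈ Finset.range M, b ^ k ≤ (1 - b)⁻¹ := by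
    have hmul := geom_sum_mul b M
    have h1b : 0 < 1 - b := by linarith
    rw [← one_div, le_div_iff₀ h1b]
    have hbM : (0:ℝ) ≤ b ^ M := pow_nonneg hb0 _
    nlinarith [hmul]
  calc val nrm lam x t ≤ ∑ k ∈ Finset.range M, b ^ k * ((ρ ^ N)⁻¹ * nrm x) := hsum
    _ = (∑ k ∈ Finset.range M, b ^ k) * ((ρ ^ N)⁻¹ * nrm x) := by
        rw [Finset.sum_mul]
    _ ≤ (1 - b)⁻¹ * ((ρ ^ N)⁻¹ * nrm x) := by
        apply mul_le_mul_of_nonneg_right hgeom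
        exact mul_nonneg (le_of_lt (inv_pos.2 hρN)) (nrm_nonneg hn x)

theorem val_add_le {nrm : C00 → ℝ} (hn : IsNorm nrm) {lam : ℝ} (hlam : 0 ≤ lam)
    (x y : C00) (t : MTree) :
    val nrm lam (x + y) t ≤ val nrm lam x t + val nrm lam y t := by
  induction t with
  | leaf E =>
      simp only [val, restr_add]
      exact hn.1 _ _
  | node m f IH =>
      simp only [val]
      rw [← mul_add, ← Finset.sum_add_distrib]
      exact mul_le_mul_of_nonneg_left (Finset.sum_le_sum fun i _ => IH i) hlam

theorem val_smul {nrm : C00 → ℝ} (hn : IsNorm nrm) (lam : ℝ) (c : ℝ) (x : C00) (t : MTree) :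
    val nrm lam (c • x) t = |c| * val nrm lam x t := by
  induction t with
  | leaf E =>
      simp only [val, restr_smul]
      exact hn.2.1 c _
  | node m f IH =>
      simp only [val]
      rw [Finset.sum_congr rfl fun i _ => IH i, ← Finset.mul_sum]
      ring

theorem val_uncond {θ : ℕ → ℝ} {nrm : C00 → ℝ} (hreg : RegularSeq θ) (hn : IsNorm nrm)
    (hT : MixedTsirelsonNorm θ nrm) (lam : ℝ) {v w : C00} (h : ∀ j, |v j| = |w j|)
    (t : MTree) : val nrm lam v t = val nrm lam w t := by
  induction t with
  | leaf E =>
      simp only [val]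
      exact nrm_uncond hreg hn hT _ _ (abs_restr_eq h E)
  | node m f IH =>
      simp only [val]
      congr 1
      exact Finset.sum_congr rfl fun i _ => IH i

end MTree

/-! #### The equivalent norm -/

/-- The tree part of the new norm. -/
def treeSup (nrm : C00 → ℝ) (lam : ℝ) (x : C00) : ℝ :=
  sSup {r : ℝ | ∃ t : MTree, t.Valid ∧ r = MTree.val nrm lam x t}

theorem treeSup_set_nonempty (nrm : C00 → ℝ) (lam : ℝ) (x : C00) :
    {r : ℝ | ∃ t : MTree, t.Valid ∧ r = MTree.val nrm lam x t}.Nonempty :=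
  ⟨MTree.val nrm lam x (MTree.leaf ∅), MTree.leaf ∅, by intro a ha; simp at ha, rfl⟩

theorem val_leaf_empty {nrm : C00 → ℝ} (hn : IsNorm nrm) (lam : ℝ) (x : C00) :
    MTree.val nrm lam x (MTree.leaf ∅) = 0 := by
  have : restr ∅ x = 0 := restr_of_disjoint (by simp)
  simp [MTree.val, this, nrm_zero hn]

section TreeSupFacts

variable {θ : ℕ → ℝ} {nrm : C00 → ℝ} {lam ρ : ℝ} {N : ℕ}
variable (hreg : RegularSeq θ) (hn : IsNorm nrm) (hT : MixedTsirelsonNorm θ nrm)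
variable (hN : 1 ≤ N) (hl0 : 0 < lam) (hl1 : lam ≤ 1) (hlρ : lam < ρ) (hbase : ρ ^ N ≤ θ N)

include hreg hn hT hN hl0 hl1 hlρ hbase

theorem treeSup_bddAbove (x : C00) :
    BddAbove {r : ℝ | ∃ t : MTree, t.Valid ∧ r = MTree.val nrm lam x t} := by
  refine ⟨(1 - lam ^ N / ρ ^ N)⁻¹ * ((ρ ^ N)⁻¹ * nrm x), ?_⟩
  rintro r ⟨t, hv, rfl⟩
  exact MTree.val_le_nrm hreg hn hT hN hl0 hl1 hlρ hbase x hv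

theorem treeSup_le (x : C00) :
    treeSup nrm lam x ≤ (1 - lam ^ N / ρ ^ N)⁻¹ * ((ρ ^ N)⁻¹ * nrm x) := by
  apply Real.sSup_le
  · rintro r ⟨t, hv, rfl⟩
    exact MTree.val_le_nrm hreg hn hT hN hl0 hl1 hlρ hbase x hv
  · have hρN : (0:ℝ) < ρ ^ N := pow_pos (lt_trans hl0 hlρ) N
    have hb1 : lam ^ N / ρ ^ N < 1 := by
      rw [div_lt_one hρN]
      exact pow_lt_pow_left₀ hlρ (le_of_lt hl0) (by omega)
    have h1 : (0:ℝ) ≤ (1 - lam ^ N / ρ ^ N)⁻¹ := inv_nonneg.2 (by linarith)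
    exact mul_nonneg h1 (mul_nonneg (inv_nonneg.2 (le_of_lt hρN)) (nrm_nonneg hn x))

theorem val_le_treeSup (x : C00) {t : MTree} (hv : t.Valid) :
    MTree.val nrm lam x t ≤ treeSup nrm lam x :=
  le_csSup (treeSup_bddAbove hreg hn hT hN hl0 hl1 hlρ hbase x) ⟨t, hv, rfl⟩

theorem treeSup_nonneg (x : C00) : 0 ≤ treeSup nrm lam x := by
  have h := val_le_treeSup hreg hn hT hN hl0 hl1 hlρ hbase x
    (t := MTree.leaf ∅) (by intro a ha; simp at ha)
  rwa [val_leaf_empty hn] at h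

theorem treeSup_add_le (x y : C00) :
    treeSup nrm lam (x + y) ≤ treeSup nrm lam x + treeSup nrm lam y := by
  apply Real.sSup_le
  · rintro r ⟨t, hv, rfl⟩
    calc MTree.val nrm lam (x + y) t
        ≤ MTree.val nrm lam x t + MTree.val nrm lam y t :=
          MTree.val_add_le hn (le_of_lt hl0) x y t
      _ ≤ treeSup nrm lam x + treeSup nrm lam y :=
          add_le_add (val_le_treeSup hreg hn hT hN hl0 hl1 hlρ hbase x hv)
            (val_le_treeSup hreg hn hT hN hl0 hl1 hlρ hbase y hv)
  · exact add_nonneg (treeSup_nonneg hreg hn hT hN hl0 hl1 hlρ hbase x)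
      (treeSup_nonneg hreg hn hT hN hl0 hl1 hlρ hbase y)

theorem treeSup_smul (c : ℝ) (x : C00) :
    treeSup nrm lam (c • x) = |c| * treeSup nrm lam x := by
  by_cases hc : c = 0
  · subst hc
    simp only [zero_smul, abs_zero, zero_mul]
    apply le_antisymm
    · apply Real.sSup_le
      · rintro r ⟨t, hv, rfl⟩
        have : MTree.val nrm lam 0 t = |(0:ℝ)| * MTree.val nrm lam 0 t := by
          rw [← MTree.val_smul hn lam 0 0 t, zero_smul]
        rw [this, abs_zero, zero_mul]
      · exact le_rfl
    · exact treeSup_nonneg hreg hn hT hN hl0 hl1 hlρ hbase 0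
  · have habs : 0 < |c| := abs_pos.2 hc
    apply le_antisymm
    · apply Real.sSup_le
      · rintro r ⟨t, hv, rfl⟩
        rw [MTree.val_smul hn lam c x t]
        exact mul_le_mul_of_nonneg_left
          (val_le_treeSup hreg hn hT hN hl0 hl1 hlρ hbase x hv) (le_of_lt habs)
      · exact mul_nonneg (le_of_lt habs) (treeSup_nonneg hreg hn hT hN hl0 hl1 hlρ hbase x)
    · rw [← le_div_iff₀' habs]
      apply Real.sSup_le
      · rintro r ⟨t, hv, rfl⟩
        rw [le_div_iff₀' habs, ← MTree.val_smul hn lam c x t]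
        exact val_le_treeSup hreg hn hT hN hl0 hl1 hlρ hbase (c • x) hv
      · exact div_nonneg (treeSup_nonneg hreg hn hT hN hl0 hl1 hlρ hbase (c • x))
          (le_of_lt habs)

theorem treeSup_uncond {v w : C00} (h : ∀ j, |v j| = |w j|) :
    treeSup nrm lam v = treeSup nrm lam w := by
  have hset : {r : ℝ | ∃ t : MTree, t.Valid ∧ r = MTree.val nrm lam v t}
      = {r : ℝ | ∃ t : MTree, t.Valid ∧ r = MTree.val nrm lam w t} := by
    ext r
    constructor
    · rintro ⟨t, hv, rfl⟩
      exact ⟨t, hv, MTree.val_uncond hreg hn hT lam h t⟩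
    · rintro ⟨t, hv, rfl⟩
      exact ⟨t, hv, (MTree.val_uncond hreg hn hT lam h t).symm⟩
  rw [treeSup, treeSup, hset]

theorem nrm_le_treeSup {x : C00} (hx : ∀ a ∈ x.support, 1 ≤ a) :
    nrm x ≤ treeSup nrm lam x := by
  have hv : (MTree.leaf x.support).Valid := hx
  have := val_le_treeSup hreg hn hT hN hl0 hl1 hlρ hbase x hv
  rwa [show MTree.val nrm lam x (MTree.leaf x.support) = nrm x by
    simp [MTree.val, restr_of_support_subset (subset_refl _)]] at this

/-- The key `ℓ1`-estimate for admissible block sequences. -/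
theorem treeSup_combine (n : ℕ) (hn1 : 0 < n) (v : ℕ → C00)
    (hord : ∀ i j : ℕ, i < j → j < n → FinLt (v i).support (v j).support)
    (hsuppge : ∀ i < n, ∀ a ∈ (v i).support, n ≤ a) :
    lam * ∑ i ∈ Finset.range n, treeSup nrm lam (v i) ≤
      treeSup nrm lam (∑ i ∈ Finset.range n, v i) := by
  classical
  set w := ∑ i ∈ Finset.range n, v i with hw
  apply le_of_forall_pos_le_add
  intro ε hε
  set δ := ε / (lam * n + 1) with hδ
  have hlamn : (0:ℝ) < lam * n + 1 := by
    have : (0:ℝ) ≤ lam * n := mul_nonneg (le_of_lt hl0) (Nat.cast_nonneg n)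
    linarith
  have hδpos : 0 < δ := div_pos hε hlamn
  have hwit : ∀ i : Fin n, ∃ t : MTree, t.Valid ∧
      treeSup nrm lam (v i) - δ < MTree.val nrm lam (v i) t := by
    intro i
    have hlt : treeSup nrm lam (v i) - δ < treeSup nrm lam (v i) :=
      sub_lt_self _ hδpos
    obtain ⟨r, ⟨t, hv, rfl⟩, hr⟩ :=
      exists_lt_of_lt_csSup (treeSup_set_nonempty nrm lam (v i)) hlt
    exact ⟨t, hv, hr⟩
  choose t ht1 ht2 using hwit
  set T : MTree := MTree.node n (fun i => (t i).restrT ((v (i:ℕ)).support)) with hT'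
  have hmemE : ∀ (i : Fin n) (E : Finset ℕ),
      E ∈ MTree.leafSet ((t i).restrT ((v (i:ℕ)).support)) → E ⊆ (v (i:ℕ)).support := by
    intro i E hE
    obtain ⟨E₀, _, rfl⟩ := MTree.leafSet_restrT.1 hE
    exact Finset.inter_subset_right
  have hTv : T.Valid := by
    refine ⟨fun i => MTree.valid_restrT (ht1 i), ?_, ?_⟩
    · intro i j hij E hE F hF a ha b hb
      have hija : (i:ℕ) < (j:ℕ) := hij
      exact hord i j hija j.2 a (hmemE i E hE ha) b (hmemE j F hF hb)
    · intro i E hE a ha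
      exact hsuppge i i.2 a (hmemE i E hE ha)
  have hvali : ∀ i : Fin n,
      MTree.val nrm lam w ((t i).restrT ((v (i:ℕ)).support)) =
        MTree.val nrm lam (v (i:ℕ)) (t i) := by
    intro i
    have h1 : MTree.val nrm lam w ((t i).restrT ((v (i:ℕ)).support)) =
        MTree.val nrm lam (v (i:ℕ)) ((t i).restrT ((v (i:ℕ)).support)) := by
      apply MTree.val_congr
      intro E hE
      have hEsub : E ⊆ (v (i:ℕ)).support := hmemE i E hE
      rw [hw, restr_sum]
      apply Finset.sum_eq_single_of_mem (i:ℕ) (Finset.mem_range.2 i.2)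
      intro j hj hne
      apply restr_of_disjoint
      intro a ha haE
      have hai : a ∈ (v (i:ℕ)).support := hEsub haE
      rcases lt_or_gt_of_ne hne with h | h
      · exact lt_irrefl a (hord j i h i.2 a ha a hai)
      · exact lt_irrefl a (hord i j h (Finset.mem_range.1 hj) a hai a ha)
    rw [h1, MTree.val_restrT (subset_refl _)]
  have hvalT : MTree.val nrm lam w T = lam * ∑ i : Fin n, MTree.val nrm lam (v (i:ℕ)) (t i) := by
    show lam * ∑ i : Fin n, MTree.val nrm lam w ((t i).restrT ((v (i:ℕ)).support)) = _
    congr 1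
    exact Finset.sum_congr rfl fun i _ => hvali i
  have hTle : MTree.val nrm lam w T ≤ treeSup nrm lam w :=
    val_le_treeSup hreg hn hT hN hl0 hl1 hlρ hbase w hTv
  have hsumlb : ∑ i ∈ Finset.range n, treeSup nrm lam (v i) - n * δ ≤
      ∑ i : Fin n, MTree.val nrm lam (v (i:ℕ)) (t i) := by
    have h1 : ∑ i : Fin n, (treeSup nrm lam (v (i:ℕ)) - δ) ≤
        ∑ i : Fin n, MTree.val nrm lam (v (i:ℕ)) (t i) :=
      Finset.sum_le_sum fun i _ => le_of_lt (ht2 i)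
    have h2 : ∑ i : Fin n, (treeSup nrm lam (v (i:ℕ)) - δ)
        = ∑ i ∈ Finset.range n, treeSup nrm lam (v i) - n * δ := by
      rw [Finset.sum_sub_distrib]
      congr 1
      · exact Fin.sum_univ_eq_sum_range (fun i => treeSup nrm lam (v i)) n
      · rw [Finset.sum_const, Finset.card_univ, Fintype.card_fin]
        simp [nsmul_eq_mul]
    rw [← h2]
    exact h1
  have hfinal : lam * (∑ i ∈ Finset.range n, treeSup nrm lam (v i) - n * δ) ≤
      treeSup nrm lam w := by
    calc lam * (∑ i ∈ Finset.range n, treeSup nrm lam (v i) - n * δ)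
        ≤ lam * ∑ i : Fin n, MTree.val nrm lam (v (i:ℕ)) (t i) :=
          mul_le_mul_of_nonneg_left hsumlb (le_of_lt hl0)
      _ = MTree.val nrm lam w T := hvalT.symm
      _ ≤ treeSup nrm lam w := hTle
  have hδbound : lam * ((n:ℝ) * δ) ≤ ε := by
    rw [hδ]
    have heq : lam * ((n:ℝ) * (ε / (lam * ↑n + 1))) = lam * (n:ℝ) * ε / (lam * ↑n + 1) := by
      ring
    rw [heq, div_le_iff₀ hlamn]
    have h0 : (0:ℝ) ≤ lam * n := mul_nonneg (le_of_lt hl0) (Nat.cast_nonneg n)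
    nlinarith
  have := mul_sub lam (∑ i ∈ Finset.range n, treeSup nrm lam (v i)) ((n:ℝ) * δ)
  nlinarith [hfinal]

end TreeSupFacts

end Aux

/-- Proposition 4.3: for every `ε > 0` there is an equivalent 1-unconditional norm
`|·|` on `X = T(θ_n,S_n)` with `δ₁((X,|·|),(e_i)) ≥ θ - ε`. -/
theorem exists_equiv_unconditional_norm_delta_one
    (θ : ℕ → ℝ) (hreg : RegularSeq θ)
    (nrm : C00 → ℝ) (hn : IsNorm nrm) (hT : MixedTsirelsonNorm θ nrm)
    (θl : ℝ) (hθl : Tendsto (fun n : ℕ => θ n ^ ((n : ℝ)⁻¹)) atTop (nhds θl))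
    (ε : ℝ) (hε : 0 < ε) :
    ∃ nrm' : C00 → ℝ, IsNorm nrm' ∧ EquivNormOn nrm nrm' ∧
      (∀ v w : C00, (∀ i, |v i| = |w i|) → nrm' v = nrm' w) ∧
      ∀ (n : ℕ) (v : ℕ → C00),
        (∀ i < n, v i ≠ 0) →
        (∀ i j : ℕ, i < j → j < n → FinLt (v i).support (v j).support) →
        (0 < n → n ≤ minSupp (v 0)) →
        (θl - ε) * ∑ i ∈ Finset.range n, nrm' (v i) ≤
          nrm' (∑ i ∈ Finset.range n, v i) := by
  classical
  have hθ1pos : 0 < θ 1 := theta_pos hreg le_rfl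
  have hθ1lt : θ 1 < 1 := theta_lt_one hreg le_rfl
  have hpowle : ∀ n : ℕ, 1 ≤ n → θ 1 ^ n ≤ θ n := by
    intro n hn
    induction n with
    | zero => omega
    | succ k IH =>
        rcases Nat.lt_or_ge 1 (k + 1) with h | h
        · have hk1 : 1 ≤ k := by omega
          calc θ 1 ^ (k + 1) = θ 1 ^ k * θ 1 := pow_succ _ _
            _ ≤ θ k * θ 1 := mul_le_mul_of_nonneg_right (IH hk1) (le_of_lt hθ1pos)
            _ ≤ θ (k + 1) := hreg.2.2.2 k 1 hk1 le_rfl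
        · have hk0 : k = 0 := by omega
          subst hk0
          simp
  have hev1 : ∀ᶠ (n : ℕ) in atTop, θ 1 ≤ θ n ^ ((n : ℝ)⁻¹) := by
    filter_upwards [eventually_ge_atTop 1] with n hn
    have hne : (n : ℝ) ≠ 0 := Nat.cast_ne_zero.2 (by omega)
    have h1 : θ 1 ^ n ≤ θ n := hpowle n hn
    have h2 : ((θ 1 ^ n : ℝ)) ^ ((n : ℝ)⁻¹) ≤ θ n ^ ((n : ℝ)⁻¹) :=
      Real.rpow_le_rpow (pow_nonneg (le_of_lt hθ1pos) n) h1 (by positivity)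
    calc θ 1 = ((θ 1 ^ n : ℝ)) ^ ((n : ℝ)⁻¹) := by
          rw [← Real.rpow_natCast (θ 1) n, ← Real.rpow_mul (le_of_lt hθ1pos),
            mul_inv_cancel₀ hne, Real.rpow_one]
      _ ≤ θ n ^ ((n : ℝ)⁻¹) := h2
  have hθlθ1 : θ 1 ≤ θl := ge_of_tendsto hθl hev1
  have hθlpos : 0 < θl := lt_of_lt_of_le hθ1pos hθlθ1
  have hθl1 : θl ≤ 1 := by
    apply le_of_tendsto hθl
    filter_upwards [eventually_ge_atTop 1] with n hn
    exact Real.rpow_le_one (le_of_lt (theta_pos hreg hn))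
      (le_of_lt (theta_lt_one hreg hn)) (by positivity)
  set lam := max (θl - ε) (θl / 2) with hlam
  have hl0 : 0 < lam := lt_of_lt_of_le (by linarith) (le_max_right _ _)
  have hlamlt : lam < θl := max_lt (by linarith) (by linarith)
  have hl1 : lam ≤ 1 := le_trans (le_of_lt hlamlt) hθl1
  have hlamge : θl - ε ≤ lam := le_max_left _ _
  set ρ := (lam + θl) / 2 with hρ
  have hlρ : lam < ρ := by rw [hρ]; linarith
  have hρθl : ρ < θl := by rw [hρ]; linarith
  have hρ0 : 0 < ρ := lt_trans hl0 hlρ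
  have hevN : ∀ᶠ (n : ℕ) in atTop, ρ < θ n ^ ((n : ℝ)⁻¹) := hθl.eventually (lt_mem_nhds hρθl)
  obtain ⟨N, hNboth⟩ := ((eventually_ge_atTop 1).and hevN).exists
  obtain ⟨hN1, hNlt⟩ := hNboth
  have hNne : (N : ℝ) ≠ 0 := Nat.cast_ne_zero.2 (by omega)
  have hbase : ρ ^ N ≤ θ N := by
    have hθN0 : (0:ℝ) ≤ θ N := le_of_lt (theta_pos hreg hN1)
    have h1 : ρ ^ N ≤ (θ N ^ ((N : ℝ)⁻¹)) ^ N :=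
      pow_le_pow_left₀ (le_of_lt hρ0) (le_of_lt hNlt) N
    have h2 : (θ N ^ ((N : ℝ)⁻¹)) ^ N = θ N := by
      rw [← Real.rpow_natCast (θ N ^ ((N : ℝ)⁻¹)) N, ← Real.rpow_mul hθN0,
        inv_mul_cancel₀ hNne, Real.rpow_one]
    rwa [h2] at h1
  refine ⟨fun x => max (nrm x) (treeSup nrm lam x), ?_, ?_, ?_, ?_⟩
  · -- IsNorm
    refine ⟨?_, ?_, ?_⟩
    · intro a b
      apply max_le
      · exact le_trans (hn.1 a b) (add_le_add (le_max_left _ _) (le_max_left _ _))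
      · exact le_trans (treeSup_add_le hreg hn hT hN1 hl0 hl1 hlρ hbase a b)
          (add_le_add (le_max_right _ _) (le_max_right _ _))
    · intro c a
      show max (nrm (c • a)) (treeSup nrm lam (c • a)) = |c| * max (nrm a) (treeSup nrm lam a)
      rw [hn.2.1, treeSup_smul hreg hn hT hN1 hl0 hl1 hlρ hbase c a]
      exact (mul_max_of_nonneg _ _ (abs_nonneg c)).symm
    · intro a ha
      exact lt_of_lt_of_le (hn.2.2 a ha) (le_max_left _ _)
  · -- EquivNormOn
    have hρN : (0:ℝ) < ρ ^ N := pow_pos hρ0 N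
    have hb1 : lam ^ N / ρ ^ N < 1 := by
      rw [div_lt_one hρN]
      exact pow_lt_pow_left₀ hlρ (le_of_lt hl0) (by omega)
    have hb0 : (0:ℝ) ≤ lam ^ N / ρ ^ N :=
      div_nonneg (pow_nonneg (le_of_lt hl0) _) (le_of_lt hρN)
    have hC0 : (0:ℝ) ≤ (1 - lam ^ N / ρ ^ N)⁻¹ * (ρ ^ N)⁻¹ :=
      mul_nonneg (inv_nonneg.2 (by linarith)) (inv_nonneg.2 (le_of_lt hρN))
    refine ⟨1, (1 - lam ^ N / ρ ^ N)⁻¹ * (ρ ^ N)⁻¹ + 1, one_pos, ?_, ?_⟩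
    · intro x
      rw [one_mul]
      exact le_max_left _ _
    · intro x
      apply max_le
      · nlinarith [nrm_nonneg hn x]
      · have h := treeSup_le hreg hn hT hN1 hl0 hl1 hlρ hbase x
        have heq : (1 - lam ^ N / ρ ^ N)⁻¹ * ((ρ ^ N)⁻¹ * nrm x)
            = ((1 - lam ^ N / ρ ^ N)⁻¹ * (ρ ^ N)⁻¹) * nrm x := by ring
        rw [heq] at h
        nlinarith [nrm_nonneg hn x]
  · -- 1-unconditional
    intro a b h
    show max (nrm a) (treeSup nrm lam a) = max (nrm b) (treeSup nrm lam b)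
    rw [nrm_uncond hreg hn hT a b h, treeSup_uncond hreg hn hT hN1 hl0 hl1 hlρ hbase h]
  · -- the ℓ1 estimate
    intro n v hnz hord hmin
    rcases Nat.eq_zero_or_pos n with hn0 | hn0
    · subst hn0
      simp only [Finset.range_zero, Finset.sum_empty, mul_zero]
      refine le_trans (le_of_eq (nrm_zero hn).symm) (le_max_left _ _)
    · have hminn := hmin hn0
      have hmin0 : ∀ a ∈ (v 0).support, n ≤ a := by
        intro a ha
        have h1 : minSupp (v 0) ≤ a := by
          apply Nat.sInf_le
          exact Finsupp.mem_support_iff.1 ha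
        omega
      have hsuppge : ∀ i < n, ∀ a ∈ (v i).support, n ≤ a := by
        intro i hi a ha
        rcases Nat.eq_zero_or_pos i with rfl | hipos
        · exact hmin0 a ha
        · obtain ⟨b, hb⟩ := Finsupp.support_nonempty_iff.2 (hnz 0 hn0)
          have hb' : n ≤ b := hmin0 b hb
          have hba : b < a := hord 0 i hipos hi b hb a ha
          omega
      have hts : ∀ i < n, max (nrm (v i)) (treeSup nrm lam (v i)) = treeSup nrm lam (v i) := by
        intro i hi
        apply max_eq_right
        apply nrm_le_treeSup hreg hn hT hN1 hl0 hl1 hlρ hbase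
        intro a ha
        exact le_trans (by omega) (hsuppge i hi a ha)
      have hcongr : ∑ i ∈ Finset.range n, max (nrm (v i)) (treeSup nrm lam (v i))
          = ∑ i ∈ Finset.range n, treeSup nrm lam (v i) :=
        Finset.sum_congr rfl fun i hi => hts i (Finset.mem_range.1 hi)
      have hsum0 : (0:ℝ) ≤ ∑ i ∈ Finset.range n, max (nrm (v i)) (treeSup nrm lam (v i)) :=
        Finset.sum_nonneg fun i _ => le_trans (nrm_nonneg hn _) (le_max_left _ _)
      calc (θl - ε) * ∑ i ∈ Finset.range n, max (nrm (v i)) (treeSup nrm lam (v i))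
          ≤ lam * ∑ i ∈ Finset.range n, max (nrm (v i)) (treeSup nrm lam (v i)) :=
            mul_le_mul_of_nonneg_right hlamge hsum0
        _ = lam * ∑ i ∈ Finset.range n, treeSup nrm lam (v i) := by rw [hcongr]
        _ ≤ treeSup nrm lam (∑ i ∈ Finset.range n, v i) :=
            treeSup_combine hreg hn hT hN1 hl0 hl1 hlρ hbase n hn0 v hord hsuppge
        _ ≤ max (nrm (∑ i ∈ Finset.range n, v i))
              (treeSup nrm lam (∑ i ∈ Finset.range n, v i)) := le_max_right _ _

end
end
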